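/- arXiv:1001.3971 — 8 statements merged into one kernel-verified Lean document; each statement's English description precedes it below -/
import Mathlib

section
/- Multi-parameter Braunstein–Caves inequality: Let ρ be a density matrix on ℂ^d, let D_1,…,D_p be Hermitian d×d complex matrices (playing the role of the partial derivatives ∂ρ/∂θ^j), and let λ^1,…,λ^p be Hermitian d×d complex matrices satisfying D_j = (1/2)(ρ λ^j + λ^j ρ) for every j (symmetric logarithmic derivatives). Let (M_m)_{m∈Ω} be a POVM with finite outcome set Ω. Define the Fisher information matrix F ∈ ℝ^{p×p} by F_{jk} = Σ over m ∈ Ω with tr(ρ M_m) ≠ 0 of Re tr(D_j M_m) · Re tr(D_k M_m) / Re tr(ρ M_m), and the SLD quantum information matrix H ∈ ℝ^{p×p} by H_{jk} = Re tr(λ^j ρ λ^k). Then H − F is positive semidefinite; equivalently, for every x ∈ ℝ^p, Σ_{j,k} x_j x_k F_{jk} ≤ Σ_{j,k} x_j x_k H_{jk}. -/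
open scoped BigOperators ComplexOrder
open Matrix

noncomputable section

/-- The Hermitian inner product on `Fin d → ℂ`, conjugate-linear in the first argument. -/
def inn {d : ℕ} (x y : Fin d → ℂ) : ℂ := ∑ i, (starRingEnd ℂ) (x i) * y i

lemma trace_self_eq {d : ℕ} (A : Matrix (Fin d) (Fin d) ℂ) :
    (Aᴴ * A).trace = ((((Aᴴ * A).trace).re : ℝ) : ℂ) ∧ 0 ≤ ((Aᴴ * A).trace).re := by
  have h : (Aᴴ * A).trace = ((∑ j, ∑ k, Complex.normSq (A k j) : ℝ) : ℂ) := by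
    simp only [Matrix.trace, Matrix.mul_apply, Matrix.diag, Matrix.conjTranspose_apply]
    push_cast
    refine Finset.sum_congr rfl fun j _ => Finset.sum_congr rfl fun k _ => ?_
    rw [Complex.normSq_eq_conj_mul_self]
    rfl
  constructor
  · rw [h]; norm_num
  · rw [h]
    simp only [Complex.ofReal_re]
    exact Finset.sum_nonneg fun j _ => Finset.sum_nonneg fun k _ => Complex.normSq_nonneg _

lemma trace_cs {d : ℕ} (A B : Matrix (Fin d) (Fin d) ℂ) :
    ‖(Aᴴ * B).trace‖ ^ 2 ≤ ((Aᴴ * A).trace).re * ((Bᴴ * B).trace).re := by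
  let toE : Matrix (Fin d) (Fin d) ℂ → EuclideanSpace ℂ (Fin d × Fin d) :=
    fun X => WithLp.toLp 2 (fun q => X q.1 q.2)
  have key : ∀ X Y : Matrix (Fin d) (Fin d) ℂ,
      (Xᴴ * Y).trace = @inner ℂ _ _ (toE X) (toE Y) := by
    intro X Y
    simp only [toE, Matrix.trace, Matrix.mul_apply, Matrix.diag, Matrix.conjTranspose_apply,
      PiLp.inner_apply, PiLp.toLp_apply, RCLike.inner_apply, Fintype.sum_prod_type]
    rw [Finset.sum_comm]
    exact Finset.sum_congr rfl fun _ _ => Finset.sum_congr rfl fun _ _ => mul_comm _ _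
  rw [key, key, key]
  calc ‖(@inner ℂ _ _ (toE A) (toE B))‖ ^ 2 ≤ (‖toE A‖ * ‖toE B‖) ^ 2 := by
        exact pow_le_pow_left₀ (norm_nonneg _) (norm_inner_le_norm (𝕜 := ℂ) _ _) 2
    _ = (@inner ℂ _ _ (toE A) (toE A)).re * (@inner ℂ _ _ (toE B) (toE B)).re := by
        rw [mul_pow, ← inner_self_eq_norm_sq (𝕜 := ℂ), ← inner_self_eq_norm_sq (𝕜 := ℂ)]
        rfl

open scoped MatrixOrder in
lemma psd_sqrt {d : ℕ} {A : Matrix (Fin d) (Fin d) ℂ} (hA : A.PosSemidef) :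
    ∃ S : Matrix (Fin d) (Fin d) ℂ, Sᴴ = S ∧ S * S = A :=
  ⟨CFC.sqrt A, (Matrix.nonneg_iff_posSemidef.mp (CFC.sqrt_nonneg A)).1,
    CFC.sqrt_mul_sqrt_self A hA.nonneg⟩

lemma trace_SXS {d : ℕ} (S X : Matrix (Fin d) (Fin d) ℂ) :
    (S * X * S).trace = (X * (S * S)).trace := by
  rw [Matrix.trace_mul_comm (S * X) S, ← Matrix.mul_assoc, Matrix.trace_mul_comm]

/-- **Multi-parameter Braunstein–Caves inequality.** -/
theorem braunstein_caves {d p : ℕ} {Ω : Type} [Fintype Ω]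
    (ρ : Matrix (Fin d) (Fin d) ℂ) (hρ : ρ.PosSemidef) (hρtr : ρ.trace = 1)
    (D lam : Fin p → Matrix (Fin d) (Fin d) ℂ)
    (hD : ∀ j, (D j).IsHermitian) (hlam : ∀ j, (lam j).IsHermitian)
    (hSLD : ∀ j, D j = (1 / 2 : ℂ) • (ρ * lam j + lam j * ρ))
    (M : Ω → Matrix (Fin d) (Fin d) ℂ)
    (hM : ∀ m, (M m).PosSemidef) (hMsum : ∑ m, M m = 1)
    (F H : Fin p → Fin p → ℝ)
    (hF : ∀ j k, F j k = ∑ m, if (ρ * M m).trace ≠ 0 then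
        ((D j * M m).trace.re * (D k * M m).trace.re) / ((ρ * M m).trace.re) else 0)
    (hH : ∀ j k, H j k = ((lam j * ρ * lam k).trace).re) :
    ∀ x : Fin p → ℝ, ∑ j, ∑ k, x j * x k * F j k ≤ ∑ j, ∑ k, x j * x k * H j k := by
  intro x
  classical
  set L : Matrix (Fin d) (Fin d) ℂ := ∑ j, (x j : ℂ) • lam j with hLdef
  obtain ⟨Sq, hSqh, hSq2⟩ := psd_sqrt hρ
  have hLh : Lᴴ = L := by
    rw [hLdef, Matrix.conjTranspose_sum]
    refine Finset.sum_congr rfl fun j _ => ?_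
    rw [Matrix.conjTranspose_smul, hlam j, Complex.star_def, Complex.conj_ofReal]
  -- RHS identity
  have hRHS : ∑ j, ∑ k, x j * x k * H j k = ((L * ρ * L).trace).re := by
    have hexp : L * ρ * L = ∑ j, ∑ k, ((x j : ℂ) * (x k : ℂ)) • (lam j * ρ * lam k) := by
      rw [hLdef, Finset.sum_mul, Finset.sum_mul]
      refine Finset.sum_congr rfl fun j _ => ?_
      rw [Matrix.smul_mul, Matrix.smul_mul, Finset.mul_sum, Finset.smul_sum]
      refine Finset.sum_congr rfl fun k _ => ?_
      rw [Matrix.mul_smul, smul_smul, Matrix.mul_assoc, ← Matrix.mul_assoc]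
    rw [hexp, Matrix.trace_sum]
    rw [Complex.re_sum]
    refine Finset.sum_congr rfl fun j _ => ?_
    rw [Matrix.trace_sum, Complex.re_sum]
    refine Finset.sum_congr rfl fun k _ => ?_
    rw [hH, Matrix.trace_smul, smul_eq_mul, ← Complex.ofReal_mul, Complex.re_ofReal_mul]
  -- LHS identity
  have hLHS : ∑ j, ∑ k, x j * x k * F j k
      = ∑ m, (if (ρ * M m).trace ≠ 0 then
          (∑ j, x j * ((D j * M m).trace).re) ^ 2 / ((ρ * M m).trace.re) else 0) := by
    simp only [hF, Finset.mul_sum]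
    rw [show (∑ j, ∑ k, ∑ m, x j * x k * (if (ρ * M m).trace ≠ 0 then
        ((D j * M m).trace.re * (D k * M m).trace.re) / ((ρ * M m).trace.re) else 0))
        = ∑ m, ∑ j, ∑ k, x j * x k * (if (ρ * M m).trace ≠ 0 then
        ((D j * M m).trace.re * (D k * M m).trace.re) / ((ρ * M m).trace.re) else 0) from
      (Finset.sum_congr rfl fun j _ => Finset.sum_comm).trans Finset.sum_comm]
    refine Finset.sum_congr rfl fun m _ => ?_
    by_cases h0 : (ρ * M m).trace ≠ 0
    · simp only [if_pos h0]
      rw [sq, Finset.sum_mul_sum, Finset.sum_div]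
      refine Finset.sum_congr rfl fun j _ => ?_
      rw [Finset.sum_div]
      refine Finset.sum_congr rfl fun k _ => ?_
      ring
    · simp only [if_neg h0, mul_zero, Finset.sum_const_zero]
  -- derivative combination
  have hDx : (∑ j, (x j : ℂ) • D j) = (1 / 2 : ℂ) • (ρ * L + L * ρ) := by
    rw [hLdef, Finset.mul_sum, Finset.sum_mul, ← Finset.sum_add_distrib, Finset.smul_sum]
    refine Finset.sum_congr rfl fun j _ => ?_
    rw [hSLD j, Matrix.mul_smul, Matrix.smul_mul, ← smul_add, smul_comm]
  have htD : ∀ m, ∑ j, x j * ((D j * M m).trace).re = ((M m * (L * ρ)).trace).re := by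
    intro m
    have h1 : ((∑ j, (x j : ℂ) • D j) * M m).trace = ∑ j, (x j : ℂ) * (D j * M m).trace := by
      rw [Finset.sum_mul, Matrix.trace_sum]
      refine Finset.sum_congr rfl fun j _ => ?_
      rw [Matrix.smul_mul, Matrix.trace_smul, smul_eq_mul]
    have h2 : ∑ j, x j * ((D j * M m).trace).re = (((∑ j, (x j : ℂ) • D j) * M m).trace).re := by
      rw [h1, Complex.re_sum]
      exact Finset.sum_congr rfl fun j _ => (Complex.re_ofReal_mul _ _).symm
    rw [h2, hDx]
    have e1 : (L * ρ * M m).trace = (M m * (L * ρ)).trace := Matrix.trace_mul_comm _ _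
    have e2 : ((ρ * L * M m).trace).re = ((M m * (L * ρ)).trace).re := by
      have : (ρ * L * M m)ᴴ = M m * (L * ρ) := by
        rw [Matrix.conjTranspose_mul, Matrix.conjTranspose_mul, hρ.1, hLh, (hM m).1]
      rw [← this, Matrix.trace_conjTranspose]
      exact (Complex.conj_re _).symm
    rw [Matrix.smul_mul, Matrix.trace_smul, Matrix.add_mul, Matrix.trace_add]
    rw [smul_eq_mul]
    have : ((1 / 2 : ℂ) * ((ρ * L * M m).trace + (L * ρ * M m).trace)).re
        = (1 / 2 : ℝ) * (((ρ * L * M m).trace).re + ((L * ρ * M m).trace).re) := by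
      rw [show (1 / 2 : ℂ) = ((1 / 2 : ℝ) : ℂ) by norm_num, Complex.re_ofReal_mul,
        Complex.add_re]
    rw [this, e1, e2]
    ring
  -- per-outcome inequality
  have key : ∀ m, (if (ρ * M m).trace ≠ 0 then
      (∑ j, x j * ((D j * M m).trace).re) ^ 2 / ((ρ * M m).trace.re) else 0)
      ≤ ((L * M m * L * ρ).trace).re := by
    intro m
    obtain ⟨N, hNh, hN2⟩ := psd_sqrt (hM m)
    set A := N * Sq with hAdef
    set B := N * (L * Sq) with hBdef
    have hAA : (Aᴴ * A).trace = (ρ * M m).trace := by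
      have hprod : Aᴴ * A = Sq * (M m) * Sq := by
        rw [hAdef, Matrix.conjTranspose_mul, hNh, hSqh, ← hN2]
        noncomm_ring
      rw [hprod, trace_SXS, hSq2, Matrix.trace_mul_comm]
    have hAB : (Aᴴ * B).trace = (M m * (L * ρ)).trace := by
      have hprod : Aᴴ * B = Sq * (M m * L) * Sq := by
        rw [hAdef, hBdef, Matrix.conjTranspose_mul, hNh, hSqh, ← hN2]
        noncomm_ring
      rw [hprod, trace_SXS, hSq2, Matrix.mul_assoc]
    have hBB : (Bᴴ * B).trace = (L * M m * L * ρ).trace := by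
      have hprod : Bᴴ * B = Sq * (L * M m * L) * Sq := by
        rw [hBdef, Matrix.conjTranspose_mul, Matrix.conjTranspose_mul, hNh, hSqh, hLh, ← hN2]
        noncomm_ring
      rw [hprod, trace_SXS, hSq2]
    have hBpos : 0 ≤ ((L * M m * L * ρ).trace).re := by
      rw [← hBB]; exact (trace_self_eq B).2
    by_cases h0 : (ρ * M m).trace ≠ 0
    · rw [if_pos h0]
      have hre0 : 0 ≤ ((ρ * M m).trace).re := by rw [← hAA]; exact (trace_self_eq A).2
      have hreal : (ρ * M m).trace = ((((ρ * M m).trace).re : ℝ) : ℂ) := by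
        rw [← hAA]; exact (trace_self_eq A).1
      have hne : ((ρ * M m).trace).re ≠ 0 := by
        intro h
        apply h0
        rw [hreal, h, Complex.ofReal_zero]
      have hc : 0 < ((ρ * M m).trace).re := lt_of_le_of_ne hre0 (Ne.symm hne)
      rw [div_le_iff₀ hc, htD m]
      calc (((M m * (L * ρ)).trace).re) ^ 2
          ≤ ‖(M m * (L * ρ)).trace‖ ^ 2 := by
            have h1 : |((M m * (L * ρ)).trace).re| ≤ ‖(M m * (L * ρ)).trace‖ :=
              Complex.abs_re_le_norm _
            rw [← sq_abs]
            exact pow_le_pow_left₀ (abs_nonneg _) h1 2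
        _ = ‖(Aᴴ * B).trace‖ ^ 2 := by rw [hAB]
        _ ≤ ((Aᴴ * A).trace).re * ((Bᴴ * B).trace).re := trace_cs A B
        _ = ((L * M m * L * ρ).trace).re * ((ρ * M m).trace).re := by
            rw [hAA, hBB]; ring
    · rw [if_neg h0]
      exact hBpos
  -- sum up
  have hsum : ∑ m, ((L * M m * L * ρ).trace).re = ((L * ρ * L).trace).re := by
    have h1 : ∑ m, (L * M m * L * ρ) = L * L * ρ := by
      rw [← Finset.sum_mul, ← Finset.sum_mul, ← Finset.mul_sum, hMsum, mul_one]
    rw [← Complex.re_sum, ← Matrix.trace_sum, h1, Matrix.trace_mul_cycle L ρ L]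
  rw [hLHS, hRHS, ← hsum]
  exact Finset.sum_le_sum fun m _ => key m
end
end

section
/- Equality condition in the multi-parameter Braunstein–Caves inequality: Let ρ be a density matrix on ℂ^d, let D_1,…,D_p be Hermitian d×d complex matrices and λ^1,…,λ^p Hermitian d×d complex matrices with D_j = (1/2)(ρ λ^j + λ^j ρ) for every j. Let (M_m)_{m∈Ω} be a POVM with finite outcome set Ω, and define F ∈ ℝ^{p×p} by F_{jk} = Σ over m ∈ Ω with tr(ρ M_m) ≠ 0 of Re tr(D_j M_m) · Re tr(D_k M_m) / Re tr(ρ M_m), and H ∈ ℝ^{p×p} by H_{jk} = Re tr(λ^j ρ λ^k). Then F = H (as matrices) if and only if there exist real numbers ξ_m^j (m ∈ Ω, 1 ≤ j ≤ p) such that M_m^{1/2} λ^j ρ^{1/2} = ξ_m^j M_m^{1/2} ρ^{1/2} for all m and j. -/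
open scoped BigOperators ComplexOrder

noncomputable section

/-- The positive semidefinite square root of a positive semidefinite matrix (definition of
`Matrix.PosSemidef.sqrt` in the older Mathlib, removed since). -/
def Matrix.PosSemidef.sqrt {n 𝕜 : Type*} [Fintype n] [RCLike 𝕜] [DecidableEq n]
    {A : Matrix n n 𝕜} (hA : A.PosSemidef) : Matrix n n 𝕜 :=
  (hA.1.eigenvectorUnitary : Matrix n n 𝕜) *
    Matrix.diagonal (fun i => ((Real.sqrt (hA.1.eigenvalues i) : ℝ) : 𝕜)) *
    (star hA.1.eigenvectorUnitary : Matrix n n 𝕜)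

lemma Matrix.PosSemidef.sqrt_conjTranspose_self {n : Type*} [Fintype n] [DecidableEq n]
    {A : Matrix n n ℂ} (hA : A.PosSemidef) : Matrix.conjTranspose hA.sqrt = hA.sqrt := by
  unfold Matrix.PosSemidef.sqrt
  simp [Matrix.conjTranspose_mul, Matrix.diagonal_conjTranspose, Matrix.mul_assoc,
    Matrix.star_eq_conjTranspose, Pi.star_def, Complex.star_def]

lemma Matrix.PosSemidef.sqrt_mul_self_eq {n : Type*} [Fintype n] [DecidableEq n]
    {A : Matrix n n ℂ} (hA : A.PosSemidef) : hA.sqrt * hA.sqrt = A := by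
  unfold Matrix.PosSemidef.sqrt
  have hu : (star hA.1.eigenvectorUnitary : Matrix n n ℂ) * (hA.1.eigenvectorUnitary) = 1 := by
    simp
  calc _ = (hA.1.eigenvectorUnitary : Matrix n n ℂ) *
        (Matrix.diagonal (fun i => ((Real.sqrt (hA.1.eigenvalues i) : ℝ) : ℂ)) *
        ((star hA.1.eigenvectorUnitary : Matrix n n ℂ) * hA.1.eigenvectorUnitary) *
        Matrix.diagonal (fun i => ((Real.sqrt (hA.1.eigenvalues i) : ℝ) : ℂ))) *
        (star hA.1.eigenvectorUnitary : Matrix n n ℂ) := by simp only [Matrix.mul_assoc]; rfl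
    _ = (hA.1.eigenvectorUnitary : Matrix n n ℂ) *
        Matrix.diagonal (RCLike.ofReal ∘ hA.1.eigenvalues) *
        (star hA.1.eigenvectorUnitary : Matrix n n ℂ) := by
      rw [hu, Matrix.mul_one, Matrix.diagonal_mul_diagonal]
      have hf : (fun i => ((Real.sqrt (hA.1.eigenvalues i) : ℝ) : ℂ) *
          ((Real.sqrt (hA.1.eigenvalues i) : ℝ) : ℂ)) = RCLike.ofReal ∘ hA.1.eigenvalues := by
        funext i
        show ((Real.sqrt (hA.1.eigenvalues i) : ℝ) : ℂ) * ((Real.sqrt (hA.1.eigenvalues i) : ℝ) : ℂ)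
          = ((hA.1.eigenvalues i : ℝ) : ℂ)
        rw [← Complex.ofReal_mul, Real.mul_self_sqrt (hA.eigenvalues_nonneg i)]
      rw [hf]
    _ = A := hA.1.spectral_theorem.symm

namespace BCaux

open Matrix

variable {d : ℕ}

lemma trace_ct_self_re (A : Matrix (Fin d) (Fin d) ℂ) :
    ((Aᴴ * A).trace).re = ∑ i, ∑ j, Complex.normSq (A j i) := by
  simp [Matrix.trace, Matrix.diag, Matrix.mul_apply, Matrix.conjTranspose_apply,
    Complex.normSq_eq_conj_mul_self, Complex.re_sum, Complex.normSq_apply]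

lemma trace_ct_self_im (A : Matrix (Fin d) (Fin d) ℂ) :
    ((Aᴴ * A).trace).im = 0 := by
  simp [Matrix.trace, Matrix.diag, Matrix.mul_apply, Matrix.conjTranspose_apply,
    Complex.im_sum]
  apply Finset.sum_eq_zero; intro i _
  apply Finset.sum_eq_zero; intro j _
  ring

lemma trace_ct_self_re_nonneg (A : Matrix (Fin d) (Fin d) ℂ) :
    0 ≤ ((Aᴴ * A).trace).re := by
  rw [trace_ct_self_re]
  apply Finset.sum_nonneg; intro i _
  exact Finset.sum_nonneg fun j _ => Complex.normSq_nonneg _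

lemma eq_zero_of_trace_ct_self_re (A : Matrix (Fin d) (Fin d) ℂ)
    (h : ((Aᴴ * A).trace).re = 0) : A = 0 := by
  rw [trace_ct_self_re] at h
  ext i j
  have h1 := (Finset.sum_eq_zero_iff_of_nonneg (fun x _ => Finset.sum_nonneg
    fun y _ => Complex.normSq_nonneg _)).mp h j (by simp)
  have h2 := (Finset.sum_eq_zero_iff_of_nonneg
    (fun x _ => Complex.normSq_nonneg _)).mp h1 i (by simp)
  simpa using Complex.normSq_eq_zero.mp h2

lemma re_trace_ct_symm (u v : Matrix (Fin d) (Fin d) ℂ) :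
    ((uᴴ * v).trace).re = ((vᴴ * u).trace).re := by
  have : (uᴴ * v).trace = star ((vᴴ * u).trace) := by
    rw [← Matrix.trace_conjTranspose]
    simp [Matrix.conjTranspose_mul]
  rw [this, Complex.star_def, Complex.conj_re]

lemma expand_re (u v : Matrix (Fin d) (Fin d) ℂ) (c : ℝ) :
    (((u - (c : ℂ) • v)ᴴ * (u - (c : ℂ) • v)).trace).re
      = ((uᴴ * u).trace).re - 2 * c * ((vᴴ * u).trace).re
        + c ^ 2 * ((vᴴ * v).trace).re := by
  have h1 : (u - (c : ℂ) • v)ᴴ * (u - (c : ℂ) • v)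
      = uᴴ * u - (c : ℂ) • (uᴴ * v) - (c : ℂ) • (vᴴ * u)
        + ((c * c : ℝ) : ℂ) • (vᴴ * v) := by
    simp only [Matrix.conjTranspose_sub, Matrix.conjTranspose_smul, Complex.star_def,
      Complex.conj_ofReal, Matrix.sub_mul, Matrix.mul_sub, Matrix.smul_mul, Matrix.mul_smul,
      smul_smul, Complex.ofReal_mul]
    module
  rw [h1]
  simp only [Matrix.trace_add, Matrix.trace_sub, Matrix.trace_smul, smul_eq_mul,
    Complex.add_re, Complex.sub_re, Complex.mul_re, Complex.ofReal_re, Complex.ofReal_im]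
  rw [re_trace_ct_symm u v]
  ring

end BCaux

open Matrix

/-- **Equality condition in the multi-parameter Braunstein–Caves inequality.**
The classical Fisher information matrix of a POVM equals the SLD quantum information
matrix iff the POVM elements satisfy the Sarovar–Milburn-type condition
`M_m^{1/2} λ^j ρ^{1/2} = ξ_m^j M_m^{1/2} ρ^{1/2}` for some reals `ξ_m^j`. -/
theorem braunstein_caves_equality {d p : ℕ} {Ω : Type} [Fintype Ω]
    (ρ : Matrix (Fin d) (Fin d) ℂ) (hρ : ρ.PosSemidef) (hρtr : ρ.trace = 1)
    (D lam : Fin p → Matrix (Fin d) (Fin d) ℂ)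
    (hD : ∀ j, (D j).IsHermitian) (hlam : ∀ j, (lam j).IsHermitian)
    (hSLD : ∀ j, D j = (1 / 2 : ℂ) • (ρ * lam j + lam j * ρ))
    (M : Ω → Matrix (Fin d) (Fin d) ℂ)
    (hM : ∀ m, (M m).PosSemidef) (hMsum : ∑ m, M m = 1)
    (F H : Fin p → Fin p → ℝ)
    (hF : ∀ j k, F j k = ∑ m, if (ρ * M m).trace ≠ 0 then
        ((D j * M m).trace.re * (D k * M m).trace.re) / ((ρ * M m).trace.re) else 0)
    (hH : ∀ j k, H j k = ((lam j * ρ * lam k).trace).re) :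
    (∀ j k, F j k = H j k) ↔
      ∃ ξ : Ω → Fin p → ℝ, ∀ m j,
        (hM m).sqrt * lam j * hρ.sqrt = (ξ m j : ℂ) • ((hM m).sqrt * hρ.sqrt) := by
  classical
  set R : Matrix (Fin d) (Fin d) ℂ := hρ.sqrt with hRdef
  set S : Ω → Matrix (Fin d) (Fin d) ℂ := fun m => (hM m).sqrt with hSdef
  have hRH : Rᴴ = R := hρ.sqrt_conjTranspose_self
  have hRR : R * R = ρ := hρ.sqrt_mul_self_eq
  have hSH : ∀ m, (S m)ᴴ = S m := fun m => (hM m).sqrt_conjTranspose_self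
  have hSS : ∀ m, S m * S m = M m := fun m => (hM m).sqrt_mul_self_eq
  set V : Ω → Matrix (Fin d) (Fin d) ℂ := fun m => S m * R with hVdef
  set U : Ω → Fin p → Matrix (Fin d) (Fin d) ℂ := fun m j => S m * lam j * R with hUdef
  have hVct : ∀ m, (V m)ᴴ = R * S m := by
    intro m; rw [hVdef]; simp [Matrix.conjTranspose_mul, hRH, hSH m]
  have hUct : ∀ m j, (U m j)ᴴ = R * (lam j * S m) := by
    intro m j; rw [hUdef]
    simp [Matrix.conjTranspose_mul, hRH, hSH m, (hlam j).eq, Matrix.mul_assoc]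
  -- trace of VᴴV
  have hVV : ∀ m, ((V m)ᴴ * V m).trace = (ρ * M m).trace := by
    intro m
    rw [hVct m, hVdef]
    have e1 : (R * S m) * (S m * R) = R * (M m * R) := by
      rw [← hSS m]; simp only [Matrix.mul_assoc]
    rw [e1, Matrix.trace_mul_comm, ← hRR]
    simp only [Matrix.mul_assoc]
    rw [Matrix.trace_mul_comm]
    simp only [Matrix.mul_assoc]
  -- trace of VᴴU
  have hVU : ∀ m j, (((V m)ᴴ * U m j).trace) = (M m * (lam j * ρ)).trace := by
    intro m j
    rw [hVct m, hUdef]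
    have e1 : (R * S m) * (S m * lam j * R) = R * (M m * (lam j * R)) := by
      rw [← hSS m]; simp only [Matrix.mul_assoc]
    rw [e1, Matrix.trace_mul_comm, ← hRR]
    simp only [Matrix.mul_assoc]
  -- re of tr(D j M m) equals re of tr(VᴴU)
  have ha : ∀ m j, (D j * M m).trace.re = (((V m)ᴴ * U m j).trace).re := by
    intro m j
    rw [hVU m j]
    set z := (M m * (lam j * ρ)).trace with hz
    have hz1 : ((lam j * ρ) * M m).trace = z := (Matrix.trace_mul_comm (M m) _).symm
    have hz2 : ((ρ * lam j) * M m).trace = star z := by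
      have e : (ρ * lam j) * M m = (M m * (lam j * ρ))ᴴ := by
        simp [Matrix.conjTranspose_mul, hρ.1.eq, (hlam j).eq, ((hM m).1).eq, Matrix.mul_assoc]
      rw [e, Matrix.trace_conjTranspose]
    have hDtr : (D j * M m).trace = (1/2 : ℂ) * ((ρ * lam j) * M m).trace
        + (1/2 : ℂ) * ((lam j * ρ) * M m).trace := by
      rw [hSLD j]
      simp [Matrix.add_mul, Matrix.smul_mul, Matrix.trace_add, Matrix.trace_smul, mul_add]
    rw [hDtr, hz1, hz2]
    have e2 : (1/2 : ℂ) * star z + (1/2 : ℂ) * z = ((z.re : ℝ) : ℂ) := by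
      have h2 := Complex.add_conj z
      calc (1/2 : ℂ) * star z + (1/2 : ℂ) * z
          = (1/2 : ℂ) * (z + (starRingEnd ℂ) z) := by rw [Complex.star_def]; ring
        _ = ((z.re : ℝ) : ℂ) := by rw [h2]; push_cast; ring
    rw [e2, Complex.ofReal_re]
  -- sum of UᴴU traces is H
  have hUU : ∀ j k, ∑ m, (((U m j)ᴴ * U m k).trace).re = H j k := by
    intro j k
    have e : ∀ m, (U m j)ᴴ * (U m k) = R * (lam j * (M m * (lam k * R))) := by
      intro m; rw [hUct m j, hUdef, ← hSS m]; simp only [Matrix.mul_assoc]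
    have esum : ∑ m, ((U m j)ᴴ * (U m k)) = R * (lam j * (lam k * R)) := by
      rw [Finset.sum_congr rfl (fun m _ => e m)]
      have e2 : ∑ m, R * (lam j * (M m * (lam k * R)))
          = R * (lam j * ((∑ m, M m) * (lam k * R))) := by
        simp [Finset.mul_sum, Finset.sum_mul]
      rw [e2, hMsum, Matrix.one_mul]
    have etr : (R * (lam j * (lam k * R))).trace = star ((lam j * ρ * lam k).trace) := by
      rw [← Matrix.trace_conjTranspose, Matrix.trace_mul_comm]
      have e3 : (lam j * (lam k * R)) * R = lam j * (lam k * ρ) := by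
        rw [← hRR]; simp only [Matrix.mul_assoc]
      rw [e3, Matrix.trace_mul_comm]
      congr 1
      simp [Matrix.conjTranspose_mul, hρ.1.eq, (hlam j).eq, (hlam k).eq, Matrix.mul_assoc]
    calc ∑ m, (((U m j)ᴴ * U m k).trace).re
        = (∑ m, ((U m j)ᴴ * U m k).trace).re := by rw [← Complex.re_sum]
      _ = ((∑ m, ((U m j)ᴴ * U m k)).trace).re := by rw [Matrix.trace_sum]
      _ = H j k := by rw [esum, etr, hH j k, Complex.star_def, Complex.conj_re]
  -- real-valuedness of tr(ρ M m)
  have him : ∀ m, (ρ * M m).trace.im = 0 := by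
    intro m; rw [← hVV m]; exact BCaux.trace_ct_self_im _
  set cV : Ω → Fin p → ℝ := fun m j =>
    if (ρ * M m).trace ≠ 0 then (D j * M m).trace.re / (ρ * M m).trace.re else 0
    with hcVdef
  set W : Ω → Fin p → Matrix (Fin d) (Fin d) ℂ :=
    fun m j => U m j - (cV m j : ℂ) • V m with hWdef
  have ht : ∀ m j, (((W m j)ᴴ * W m j).trace).re
      = (((U m j)ᴴ * U m j).trace).re - 2 * cV m j * (D j * M m).trace.re
        + (cV m j)^2 * (ρ * M m).trace.re := by
    intro m j
    rw [hWdef]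
    simp only
    rw [BCaux.expand_re, ← ha m j, hVV m]
  -- diagonal difference as a sum of nonnegative terms
  have hdiff : ∀ j, H j j - F j j = ∑ m, (((W m j)ᴴ * W m j).trace).re := by
    intro j
    rw [hF j j, ← hUU j j, ← Finset.sum_sub_distrib]
    apply Finset.sum_congr rfl
    intro m _
    rw [ht m j]
    by_cases h : (ρ * M m).trace ≠ 0
    · have hb : (ρ * M m).trace.re ≠ 0 := by
        intro hre; exact h (Complex.ext hre (him m))
      rw [if_pos h, hcVdef]
      simp only [if_pos h]
      field_simp
      ring
    · rw [if_neg h, hcVdef]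
      simp only [if_neg h]
      ring
  constructor
  · intro hFH
    refine ⟨cV, fun m j => ?_⟩
    have hsum0 : ∑ m, (((W m j)ᴴ * W m j).trace).re = 0 := by
      rw [← hdiff j, hFH j j, sub_self]
    have hterm0 : (((W m j)ᴴ * W m j).trace).re = 0 :=
      (Finset.sum_eq_zero_iff_of_nonneg
        (fun x _ => BCaux.trace_ct_self_re_nonneg _)).mp hsum0 m (by simp)
    have hW0 : W m j = 0 := BCaux.eq_zero_of_trace_ct_self_re _ hterm0
    have hfin : U m j = (cV m j : ℂ) • V m := sub_eq_zero.mp hW0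
    exact hfin
  · rintro ⟨ξ, hξ⟩ j k
    have hξ' : ∀ m j, U m j = (ξ m j : ℂ) • V m := fun m j => hξ m j
    have haξ : ∀ m j, (D j * M m).trace.re = ξ m j * (ρ * M m).trace.re := by
      intro m j
      rw [ha m j, hξ' m j, Matrix.mul_smul, Matrix.trace_smul, smul_eq_mul,
        Complex.re_ofReal_mul, hVV m]
    have hgξ : ∀ m, (((U m j)ᴴ * U m k).trace).re
        = ξ m j * ξ m k * (ρ * M m).trace.re := by
      intro m
      rw [hξ' m j, hξ' m k, Matrix.conjTranspose_smul, Matrix.smul_mul, Matrix.mul_smul,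
        smul_smul, Matrix.trace_smul, smul_eq_mul]
      have e : (starRingEnd ℂ) ((ξ m j : ℝ) : ℂ) * ((ξ m k : ℝ) : ℂ)
          = ((ξ m j * ξ m k : ℝ) : ℂ) := by
        rw [Complex.conj_ofReal]; push_cast; ring
      rw [show star ((ξ m j : ℝ) : ℂ) = (starRingEnd ℂ) ((ξ m j : ℝ) : ℂ) from rfl, e,
        Complex.re_ofReal_mul, hVV m]
    rw [hF j k, ← hUU j k]
    apply Finset.sum_congr rfl
    intro m _
    rw [hgξ m]
    by_cases h : (ρ * M m).trace ≠ 0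
    · have hb : (ρ * M m).trace.re ≠ 0 := by
        intro hre; exact h (Complex.ext hre (him m))
      rw [if_pos h, haξ m j, haξ m k]
      field_simp
    · have hb : (ρ * M m).trace.re = 0 := by
        push_neg at h; rw [h]; rfl
      rw [if_neg h, hb, mul_zero]
end
end

section
/- Expression for the Sarovar–Milburn bound (Proposition): Let ψ₀ ∈ ℂ^d be a unit vector and ρ₀ = |ψ₀⟩⟨ψ₀|. Let Υ_1(θ),…,Υ_d(θ) be d×d complex matrices differentiable in θ ∈ ℝ (canonical Kraus operators), and suppose Υ_k(θ)ψ₀ = √(p_k(θ)) · w_k(θ) for every k and θ, where the data p_k, w_k are as in the spectral-family setup. Then 4 Σ_{k=1}^d tr( Υ_k'(θ) ρ₀ Υ_k'(θ)† ) = C_Υ(θ), where Υ_k' = dΥ_k/dθ and † denotes conjugate transpose. -/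
open scoped BigOperators Matrix

noncomputable section

namespace SMaux

lemma inn_eq_inner {d : ℕ} (x y : Fin d → ℂ) :
    inn x y = @inner ℂ (EuclideanSpace ℂ (Fin d)) _ (WithLp.toLp 2 x) (WithLp.toLp 2 y) := by
  simp [inn, PiLp.inner_apply, RCLike.inner_apply, mul_comm]

lemma inn_conj {d : ℕ} (x y : Fin d → ℂ) : inn x y = (starRingEnd ℂ) (inn y x) := by
  simp [inn, map_mul, mul_comm]

lemma hasDerivAt_conjC {f : ℝ → ℂ} {f' : ℂ} {x : ℝ} (hf : HasDerivAt f f' x) :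
    HasDerivAt (fun t => (starRingEnd ℂ) (f t)) ((starRingEnd ℂ) f') x := by
  have := (Complex.conjCLE.toContinuousLinearMap.hasFDerivAt
      (x := f x)).comp_hasDerivAt x hf
  exact this

lemma hasDerivAt_inn {d : ℕ} {f g : ℝ → Fin d → ℂ} {f' g' : Fin d → ℂ} {x : ℝ}
    (hf : HasDerivAt f f' x) (hg : HasDerivAt g g' x) :
    HasDerivAt (fun t => inn (f t) (g t)) (inn f' (g x) + inn (f x) g') x := by
  have hf' := hasDerivAt_pi.1 hf
  have hg' := hasDerivAt_pi.1 hg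
  have h : HasDerivAt (fun t => ∑ i, (starRingEnd ℂ) (f t i) * (g t i))
      (∑ i, ((starRingEnd ℂ) (f' i) * g x i + (starRingEnd ℂ) (f x i) * g' i)) x :=
    HasDerivAt.fun_sum fun i _ => (hasDerivAt_conjC (hf' i)).mul (hg' i)
  simpa [inn, Finset.sum_add_distrib] using h

lemma trace_eq {d : ℕ} (A : Matrix (Fin d) (Fin d) ℂ) (ψ : Fin d → ℂ) :
    (A * Matrix.vecMulVec ψ (star ψ) * Aᴴ).trace = inn (A.mulVec ψ) (A.mulVec ψ) := by
  simp only [Matrix.trace, Matrix.diag_apply, Matrix.mul_apply, Matrix.vecMulVec_apply,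
    Matrix.conjTranspose_apply, Matrix.mulVec, dotProduct, inn, Pi.star_apply,
    RCLike.star_def]
  refine Finset.sum_congr rfl fun i _ => ?_
  rw [map_sum, Finset.sum_mul]
  refine Finset.sum_congr rfl fun l _ => ?_
  rw [Finset.sum_mul, Finset.mul_sum]
  refine Finset.sum_congr rfl fun j _ => ?_
  simp only [map_mul]
  ring

lemma inn_comb {d : ℕ} (A B : ℂ) (x y : Fin d → ℂ) :
    inn (fun i => A * x i + B * y i) (fun i => A * x i + B * y i)
      = (starRingEnd ℂ) A * A * inn x x + (starRingEnd ℂ) A * B * inn x y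
        + (starRingEnd ℂ) B * A * inn y x + (starRingEnd ℂ) B * B * inn y y := by
  have h : ∀ i, (starRingEnd ℂ) (A * x i + B * y i) * (A * x i + B * y i)
      = (starRingEnd ℂ) A * A * ((starRingEnd ℂ) (x i) * x i)
        + (starRingEnd ℂ) A * B * ((starRingEnd ℂ) (x i) * y i)
        + (starRingEnd ℂ) B * A * ((starRingEnd ℂ) (y i) * x i)
        + (starRingEnd ℂ) B * B * ((starRingEnd ℂ) (y i) * y i) := by
    intro i; simp only [map_add, map_mul]; ring
  simp only [inn, h, Finset.sum_add_distrib, Finset.mul_sum]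

lemma parseval {d : ℕ} (hd : 1 ≤ d) (e : Fin d → Fin d → ℂ)
    (he : ∀ j k, inn (e j) (e k) = if j = k then 1 else 0) (x : Fin d → ℂ) :
    inn x x = ((∑ j, ‖inn (e j) x‖ ^ 2 : ℝ) : ℂ) := by
  haveI : Nonempty (Fin d) := ⟨⟨0, hd⟩⟩
  have hon : Orthonormal (E := EuclideanSpace ℂ (Fin d)) ℂ (fun j => WithLp.toLp 2 (e j)) := by
    rw [orthonormal_iff_ite]
    intro i j
    rw [← inn_eq_inner]
    exact he i j
  have hcard : Fintype.card (Fin d) = Module.finrank ℂ (EuclideanSpace ℂ (Fin d)) := by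
    simp [finrank_euclideanSpace]
  let bb := basisOfOrthonormalOfCardEqFinrank hon hcard
  have hbb : ⇑bb = (fun j => WithLp.toLp 2 (e j)) :=
    coe_basisOfOrthonormalOfCardEqFinrank hon hcard
  let b : OrthonormalBasis (Fin d) ℂ (EuclideanSpace ℂ (Fin d)) :=
    bb.toOrthonormalBasis (by rwa [hbb])
  have hb : ∀ j, b j = WithLp.toLp 2 (e j) := by
    intro j
    show bb.toOrthonormalBasis _ j = WithLp.toLp 2 (e j)
    rw [Module.Basis.coe_toOrthonormalBasis, hbb]
  have key := b.sum_inner_mul_inner (E := EuclideanSpace ℂ (Fin d)) (WithLp.toLp 2 x) (WithLp.toLp 2 x)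
  rw [inn_eq_inner, ← key]
  push_cast
  refine Finset.sum_congr rfl fun j _ => ?_
  have h2 : (@inner ℂ (EuclideanSpace ℂ (Fin d)) _ (b j) (WithLp.toLp 2 x) : ℂ)
      = inn (e j) x := by rw [hb, ← inn_eq_inner]
  have h1 : (@inner ℂ (EuclideanSpace ℂ (Fin d)) _ (WithLp.toLp 2 x) (b j) : ℂ)
      = (starRingEnd ℂ) (inn (e j) x) := by
    rw [← inner_conj_symm, h2]
  rw [h1, h2, mul_comm, Complex.mul_conj, Complex.normSq_eq_norm_sq]
  push_cast
  ring

lemma sum_split {d : ℕ} (f : Fin d → Fin d → ℝ) :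
    ∑ j, ∑ k, f j k =
      (∑ j, ∑ k, if j < k then f j k + f k j else 0) + ∑ k, f k k := by
  have h : ∀ j k : Fin d, f j k = (if j < k then f j k else 0)
      + (if k < j then f j k else 0) + (if j = k then f j k else 0) := by
    intro j k
    rcases lt_trichotomy j k with h | rfl | h
    · simp [h, h.ne, not_lt_of_gt h]
    · simp
    · simp [h, h.ne', not_lt_of_gt h]
  calc ∑ j, ∑ k, f j k
      = (∑ j, ∑ k, if j < k then f j k else 0) + (∑ j, ∑ k, if k < j then f j k else 0)
        + (∑ j, ∑ k, if j = k then f j k else 0) := by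
        simp only [← Finset.sum_add_distrib, ← h]
    _ = (∑ j, ∑ k, if j < k then f j k + f k j else 0) + ∑ k, f k k := by
        have h2 : (∑ j, ∑ k, if k < j then f j k else 0)
            = ∑ j, ∑ k, if j < k then f k j else 0 := Finset.sum_comm
        have h3 : (∑ j : Fin d, ∑ k, if j = k then f j k else 0) = ∑ k, f k k := by
          refine Finset.sum_congr rfl fun j _ => ?_
          simp
        rw [h2, h3, ← Finset.sum_add_distrib]
        congr 1
        refine Finset.sum_congr rfl fun j _ => ?_
        rw [← Finset.sum_add_distrib]
        refine Finset.sum_congr rfl fun k _ => ?_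
        by_cases hjk : j < k <;> simp [hjk]

end SMaux

/-- **Expression for the Sarovar–Milburn bound.**  For a family of canonical Kraus
operators `Υ_k(θ)` with `Υ_k(θ)ψ₀ = √(p_k(θ)) w_k(θ)`, the quantity
`4 Σ_k tr(Υ_k'(θ) ρ₀ Υ_k'(θ)†)` equals `C_Υ(θ)`. -/
theorem sarovar_milburn_bound_expression {d : ℕ} (hd : 1 ≤ d)
    (p : Fin d → ℝ → ℝ) (w : Fin d → ℝ → (Fin d → ℂ))
    (p' : Fin d → ℝ → ℝ) (w' : Fin d → ℝ → (Fin d → ℂ))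
    (horth : ∀ θ (j k : Fin d), inn (w j θ) (w k θ) = if j = k then 1 else 0)
    (hpnn : ∀ (k : Fin d) θ, 0 ≤ p k θ) (hpsum : ∀ θ, ∑ k, p k θ = 1)
    (hp' : ∀ (k : Fin d) θ, HasDerivAt (p k) (p' k θ) θ)
    (hw' : ∀ (k : Fin d) θ, HasDerivAt (w k) (w' k θ) θ)
    (hdich : ∀ k : Fin d, (∀ θ, 0 < p k θ) ∨ (∀ θ, p k θ = 0))
    (ψ₀ : Fin d → ℂ) (hψ₀ : inn ψ₀ ψ₀ = 1)
    (Υ Υ' : Fin d → ℝ → Matrix (Fin d) (Fin d) ℂ)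
    (hΥ' : ∀ (k : Fin d) θ (i j : Fin d), HasDerivAt (fun t => Υ k t i j) (Υ' k θ i j) θ)
    (hK : ∀ (k : Fin d) θ, (Υ k θ).mulVec ψ₀ = (Real.sqrt (p k θ) : ℂ) • w k θ) :
    ∀ θ : ℝ,
      4 * ∑ k, (Υ' k θ * Matrix.vecMulVec ψ₀ (star ψ₀) * (Υ' k θ)ᴴ).trace =
        (((∑ k, if 0 < p k θ then (p' k θ) ^ 2 / p k θ else 0)
          + 4 * ∑ j, ∑ k, (if j < k ∧ 0 < p j θ + p k θ then
              (p j θ + p k θ) * ‖inn (w' j θ) (w k θ)‖ ^ 2 else 0)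
          + 4 * ∑ k, (if 0 < p k θ then
              p k θ * ‖inn (w' k θ) (w k θ)‖ ^ 2 else 0) : ℝ) : ℂ) := by
  intro θ
  set q : Fin d → Fin d → ℝ := fun j k => ‖inn (w' j θ) (w k θ)‖ ^ 2 with hq
  -- skew-symmetry of derivative inner products
  have hskew : ∀ j k : Fin d, inn (w' j θ) (w k θ) + inn (w j θ) (w' k θ) = 0 := by
    intro j k
    have h1 : HasDerivAt (fun t => inn (w j t) (w k t))
        (inn (w' j θ) (w k θ) + inn (w j θ) (w' k θ)) θ :=
      SMaux.hasDerivAt_inn (hw' j θ) (hw' k θ)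
    have h2 : HasDerivAt (fun t => inn (w j t) (w k t)) 0 θ := by
      have he : (fun t => inn (w j t) (w k t)) = fun _ => (if j = k then (1:ℂ) else 0) := by
        funext t; exact horth t j k
      rw [he]; exact hasDerivAt_const θ _
    exact h1.unique h2
  have habs1 : ∀ j k : Fin d, ‖inn (w j θ) (w' k θ)‖
      = ‖inn (w' j θ) (w k θ)‖ := by
    intro j k
    have hx : inn (w j θ) (w' k θ) = -inn (w' j θ) (w k θ) := by
      linear_combination hskew j k
    rw [hx, norm_neg]
  have hqsymm : ∀ j k : Fin d, q k j = q j k := by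
    intro j k
    have h1 : ‖inn (w' k θ) (w j θ)‖ = ‖inn (w j θ) (w' k θ)‖ := by
      rw [SMaux.inn_conj (w' k θ) (w j θ), Complex.norm_conj]
    simp only [hq]
    rw [h1, habs1]
  -- the derivative vectors
  set v : Fin d → Fin d → ℂ := fun k => (Υ' k θ).mulVec ψ₀ with hv
  have hvder : ∀ (k i : Fin d),
      HasDerivAt (fun t => ((Real.sqrt (p k t) : ℂ)) * w k t i) (v k i) θ := by
    intro k i
    have h1 : HasDerivAt (fun t => (Υ k t).mulVec ψ₀ i) (v k i) θ := by
      have hs := HasDerivAt.fun_sum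
        (fun j (_ : j ∈ Finset.univ) => (hΥ' k θ i j).mul_const (ψ₀ j))
      simpa [Matrix.mulVec, dotProduct, hv] using hs
    have he : (fun t => (Υ k t).mulVec ψ₀ i)
        = fun t => ((Real.sqrt (p k t) : ℂ)) * w k t i := by
      funext t
      rw [hK k t]
      simp
    rwa [he] at h1
  -- key per-k identity
  have hkey : ∀ k : Fin d, 4 * inn (v k) (v k)
      = (((if 0 < p k θ then p' k θ ^ 2 / p k θ else 0)
          + 4 * (p k θ * ∑ j, q j k) : ℝ) : ℂ) := by
    intro k
    rcases hdich k with hpos | hzero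
    · set s : ℝ := Real.sqrt (p k θ) with hs
      have hspos : 0 < s := Real.sqrt_pos.2 (hpos θ)
      have hs2 : s ^ 2 = p k θ := Real.sq_sqrt (hpnn k θ)
      set a : ℝ := p' k θ / (2 * s) with ha
      have hsq : HasDerivAt (fun t => Real.sqrt (p k t)) a θ :=
        (hp' k θ).sqrt (ne_of_gt (hpos θ))
      have hvk : v k = fun i => (a : ℂ) * w k θ i + (s : ℂ) * w' k θ i := by
        funext i
        exact (hvder k i).unique ((hsq.ofReal_comp).mul (hasDerivAt_pi.1 (hw' k θ) i))
      have hps : inn (w' k θ) (w' k θ) = ((∑ j, q j k : ℝ) : ℂ) := by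
        rw [SMaux.parseval hd (fun j => w j θ) (horth θ) (w' k θ)]
        norm_cast
        refine Finset.sum_congr rfl fun j _ => ?_
        rw [habs1 j k]
      have hfrac : p' k θ ^ 2 / p k θ = 4 * a ^ 2 := by
        rw [ha, ← hs2]
        field_simp
        ring
      rw [hvk, SMaux.inn_comb, horth θ k k, if_pos rfl, if_pos (hpos θ), hps, hfrac, ← hs2]
      have hXY := hskew k k
      have hX : inn (w k θ) (w' k θ) = -inn (w' k θ) (w k θ) := by linear_combination hXY
      rw [hX, Complex.conj_ofReal, Complex.conj_ofReal]
      push_cast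
      ring
    · have hvk : v k = fun _ => (0:ℂ) := by
        funext i
        have h0 : HasDerivAt (fun t => ((Real.sqrt (p k t) : ℂ)) * w k t i) 0 θ := by
          have he : (fun t => ((Real.sqrt (p k t) : ℂ)) * w k t i) = fun _ => 0 := by
            funext t; rw [hzero t]; simp
          rw [he]; exact hasDerivAt_const θ 0
        exact (hvder k i).unique h0
      have hnp : ¬ 0 < p k θ := by rw [hzero θ]; exact lt_irrefl 0
      rw [hvk, if_neg hnp, hzero θ]
      simp [inn]
  -- rewrite traces
  have htr : ∀ k : Fin d, (Υ' k θ * Matrix.vecMulVec ψ₀ (star ψ₀) * (Υ' k θ)ᴴ).trace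
      = inn (v k) (v k) := fun k => SMaux.trace_eq (Υ' k θ) ψ₀
  have hsum : 4 * ∑ k, (Υ' k θ * Matrix.vecMulVec ψ₀ (star ψ₀) * (Υ' k θ)ᴴ).trace
      = ((∑ k, ((if 0 < p k θ then p' k θ ^ 2 / p k θ else 0)
          + 4 * (p k θ * ∑ j, q j k)) : ℝ) : ℂ) := by
    simp_rw [htr]
    rw [Finset.mul_sum]
    simp_rw [hkey]
    norm_cast
  rw [hsum]
  refine Complex.ofReal_inj.2 ?_
  -- now a purely real computation
  have hA : ∀ j k : Fin d, (if j < k then p k θ * q j k + p j θ * q k j else 0)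
      = (if j < k ∧ 0 < p j θ + p k θ then (p j θ + p k θ) * q j k else 0) := by
    intro j k
    by_cases hjk : j < k
    · rw [if_pos hjk, hqsymm j k]
      by_cases hp : 0 < p j θ + p k θ
      · rw [if_pos ⟨hjk, hp⟩]; ring
      · rw [if_neg (by tauto)]
        have hj0 : p j θ = 0 := by
          have := hpnn j θ; have := hpnn k θ; push_neg at hp; linarith
        have hk0 : p k θ = 0 := by
          have := hpnn j θ; have := hpnn k θ; push_neg at hp; linarith
        rw [hj0, hk0]; ring
    · rw [if_neg hjk, if_neg (by tauto)]
  have hB : ∀ k : Fin d, p k θ * q k k = (if 0 < p k θ then p k θ * q k k else 0) := by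
    intro k
    by_cases h : 0 < p k θ
    · rw [if_pos h]
    · rw [if_neg h]
      have h0 : p k θ = 0 := le_antisymm (not_lt.1 h) (hpnn k θ)
      rw [h0]; ring
  have hmid : ∑ k, (4 * (p k θ * ∑ j, q j k))
      = 4 * (∑ j, ∑ k, (if j < k ∧ 0 < p j θ + p k θ then (p j θ + p k θ) * q j k else 0))
        + 4 * (∑ k, (if 0 < p k θ then p k θ * q k k else 0)) := by
    have h1 : ∑ k, p k θ * ∑ j, q j k = ∑ j, ∑ k, p k θ * q j k := by
      simp_rw [Finset.mul_sum]
      exact Finset.sum_comm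
    have h2 := SMaux.sum_split (fun j k => p k θ * q j k)
    rw [← Finset.mul_sum, h1, h2]
    have h3 : (∑ j, ∑ k, if j < k then p k θ * q j k + p j θ * q k j else 0)
        = ∑ j, ∑ k, (if j < k ∧ 0 < p j θ + p k θ then (p j θ + p k θ) * q j k else 0) := by
      refine Finset.sum_congr rfl fun j _ => Finset.sum_congr rfl fun k _ => hA j k
    have h4 : (∑ k, p k θ * q k k) = ∑ k, (if 0 < p k θ then p k θ * q k k else 0) :=
      Finset.sum_congr rfl fun k _ => hB k
    rw [h3, h4]
    ring
  rw [Finset.sum_add_distrib, hmid]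
  ring
end
end

section
/- Explicit SLD and value of the SLD quantum information (Proposition): In the spectral-family setup, define λ̃_θ = Σ_{k: p_k>0} (p_k'(θ)/p_k(θ)) |w_k(θ)⟩⟨w_k(θ)| + 2 Σ_{j≠k, p_j+p_k>0} ((p_j(θ)−p_k(θ))/(p_j(θ)+p_k(θ))) ⟨w_j'(θ), w_k(θ)⟩ |w_j(θ)⟩⟨w_k(θ)|. Then λ̃_θ is Hermitian, it satisfies the SLD equation dρ_θ/dθ = (1/2)(ρ_θ λ̃_θ + λ̃_θ ρ_θ), and tr(ρ_θ λ̃_θ²) = H(θ). -/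
open scoped BigOperators Matrix

noncomputable section

namespace SLDaux

variable {d : ℕ}

lemma inn_conj (x y : Fin d → ℂ) : inn x y = (starRingEnd ℂ) (inn y x) := by
  simp [inn, map_sum, mul_comm]

lemma vecMulVec_mul (u v x y : Fin d → ℂ) :
    Matrix.vecMulVec u v * Matrix.vecMulVec x y = (v ⬝ᵥ x) • Matrix.vecMulVec u y := by
  ext i j
  simp only [Matrix.mul_apply, Matrix.vecMulVec_apply, Matrix.smul_apply, dotProduct,
    smul_eq_mul, Finset.sum_mul]
  exact Finset.sum_congr rfl fun m _ => by ring

lemma star_dot (u v : Fin d → ℂ) : star u ⬝ᵥ v = inn u v := by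
  simp [inn, dotProduct]

lemma trace_vmv (u v : Fin d → ℂ) : (Matrix.vecMulVec u (star v)).trace = inn v u := by
  simp [Matrix.trace, Matrix.diag, inn, Matrix.vecMulVec_apply, mul_comm]

lemma vmv_conjTranspose (x y : Fin d → ℂ) :
    (Matrix.vecMulVec x (star y))ᴴ = Matrix.vecMulVec y (star x) := by
  ext i j
  simp [Matrix.conjTranspose_apply, Matrix.vecMulVec_apply, mul_comm]

section ONB
variable (u : Fin d → Fin d → ℂ)
    (horth : ∀ j k : Fin d, inn (u j) (u k) = if j = k then 1 else 0)

include horth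

lemma complete : ∀ i j : Fin d, ∑ m, u m i * (starRingEnd ℂ) (u m j) = if i = j then 1 else 0 := by
  intro i j
  let A : Matrix (Fin d) (Fin d) ℂ := Matrix.of fun k i => (starRingEnd ℂ) (u k i)
  have h1 : A * Aᴴ = 1 := by
    ext a b
    simp only [Matrix.mul_apply, Matrix.conjTranspose_apply, Matrix.one_apply, A, Matrix.of_apply]
    rw [← horth a b]
    simp [inn, mul_comm]
  have h2 : Aᴴ * A = 1 := mul_eq_one_comm.mp h1
  have h3 := congrFun (congrFun h2 i) j
  simp only [Matrix.mul_apply, Matrix.conjTranspose_apply, Matrix.one_apply, A, Matrix.of_apply] at h3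
  rw [← h3]
  exact Finset.sum_congr rfl fun m _ => by simp [mul_comm]

lemma expand (x : Fin d → ℂ) (i : Fin d) : ∑ m, inn (u m) x * u m i = x i := by
  simp only [inn, Finset.sum_mul]
  rw [Finset.sum_comm]
  have : ∀ j, ∑ m, (starRingEnd ℂ) (u m j) * x j * u m i
      = (if i = j then 1 else 0) * x j := by
    intro j
    rw [← complete u horth i j, Finset.sum_mul]
    exact Finset.sum_congr rfl fun m _ => by ring
  rw [Finset.sum_congr rfl fun j _ => this j]
  simp

lemma expandA (x y : Fin d → ℂ) :
    Matrix.vecMulVec x (star y)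
      = ∑ m, inn (u m) x • Matrix.vecMulVec (u m) (star y) := by
  ext i j
  simp only [Matrix.sum_apply, Matrix.smul_apply, Matrix.vecMulVec_apply, smul_eq_mul]
  rw [show ∑ m, inn (u m) x * (u m i * (star y) j) = (∑ m, inn (u m) x * u m i) * (star y) j by
    rw [Finset.sum_mul]; exact Finset.sum_congr rfl fun m _ => by ring]
  rw [expand u horth x i]


lemma expandB (x y : Fin d → ℂ) :
    Matrix.vecMulVec x (star y)
      = ∑ m, (starRingEnd ℂ) (inn (u m) y) • Matrix.vecMulVec x (star (u m)) := by
  ext i j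
  simp only [Matrix.sum_apply, Matrix.smul_apply, Matrix.vecMulVec_apply, smul_eq_mul,
    Pi.star_apply]
  rw [show ∑ m, (starRingEnd ℂ) (inn (u m) y) * (x i * star (u m j))
      = x i * (starRingEnd ℂ) (∑ m, inn (u m) y * u m j) by
    rw [map_sum, Finset.mul_sum]
    exact Finset.sum_congr rfl fun m _ => by
      simp only [Pi.star_apply, RCLike.star_def, map_mul]
      ring]
  rw [expand u horth y j, Complex.star_def]

lemma Emul (a b a' b' : Fin d) :
    Matrix.vecMulVec (u a) (star (u b)) * Matrix.vecMulVec (u a') (star (u b'))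
      = (if b = a' then (1:ℂ) else 0) • Matrix.vecMulVec (u a) (star (u b')) := by
  rw [vecMulVec_mul, star_dot, horth]

lemma Ecomp (f g : Fin d → Fin d → ℂ) :
    (∑ a, ∑ b, f a b • Matrix.vecMulVec (u a) (star (u b)))
      * (∑ a, ∑ b, g a b • Matrix.vecMulVec (u a) (star (u b)))
      = ∑ a, ∑ b, (∑ m, f a m * g m b) • Matrix.vecMulVec (u a) (star (u b)) := by
  have hrow : ∀ a b : Fin d,
      Matrix.vecMulVec (u a) (star (u b))
        * (∑ a', ∑ b', g a' b' • Matrix.vecMulVec (u a') (star (u b')))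
      = ∑ b', g b b' • Matrix.vecMulVec (u a) (star (u b')) := by
    intro a b
    rw [Finset.mul_sum]
    rw [Finset.sum_eq_single b]
    · rw [Finset.mul_sum]
      exact Finset.sum_congr rfl fun b' _ => by
        rw [mul_smul_comm, Emul u horth]; simp
    · intro a' _ hne
      rw [Finset.mul_sum]
      refine Finset.sum_eq_zero fun b' _ => ?_
      rw [mul_smul_comm, Emul u horth]
      simp [Ne.symm hne]
    · intro h; exact absurd (Finset.mem_univ b) h
  rw [Finset.sum_mul]
  refine Finset.sum_congr rfl fun a _ => ?_
  rw [Finset.sum_mul]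
  calc ∑ b, f a b • Matrix.vecMulVec (u a) (star (u b))
        * (∑ a', ∑ b', g a' b' • Matrix.vecMulVec (u a') (star (u b')))
      = ∑ b, ∑ b', (f a b * g b b') • Matrix.vecMulVec (u a) (star (u b')) := by
        refine Finset.sum_congr rfl fun b _ => ?_
        rw [smul_mul_assoc, hrow a b, Finset.smul_sum]
        exact Finset.sum_congr rfl fun b' _ => by rw [smul_smul]
    _ = ∑ b', (∑ b, f a b * g b b') • Matrix.vecMulVec (u a) (star (u b')) := by
        rw [Finset.sum_comm]
        exact Finset.sum_congr rfl fun b' _ => by rw [Finset.sum_smul]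

lemma Etrace (f : Fin d → Fin d → ℂ) :
    (∑ a, ∑ b, f a b • Matrix.vecMulVec (u a) (star (u b))).trace = ∑ a, f a a := by
  rw [Matrix.trace_sum]
  refine Finset.sum_congr rfl fun a _ => ?_
  rw [Matrix.trace_sum]
  have : ∀ b, (f a b • Matrix.vecMulVec (u a) (star (u b))).trace
      = if b = a then f a b else 0 := by
    intro b
    rw [Matrix.trace_smul, trace_vmv, horth, smul_eq_mul]
    split <;> simp
  rw [Finset.sum_congr rfl fun b _ => this b]
  simp

end ONB

variable {d : ℕ}

def Lc (P P' : Fin d → ℝ) (c : Fin d → Fin d → ℂ) (a b : Fin d) : ℂ :=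
  (if a = b ∧ 0 < P a then ((P' a / P a : ℝ) : ℂ) else 0)
  + (if a ≠ b ∧ 0 < P a + P b then
      2 * (((P a - P b) / (P a + P b) : ℝ) : ℂ) * c a b else 0)

variable {P P' : Fin d → ℝ} {c : Fin d → Fin d → ℂ}

lemma Lc_diag_pos {a : Fin d} (hp : 0 < P a) : Lc P P' c a a = ((P' a / P a : ℝ) : ℂ) := by
  simp [Lc, hp]

lemma Lc_diag_neg {a : Fin d} (hp : ¬ 0 < P a) : Lc P P' c a a = 0 := by
  simp [Lc, hp]

lemma Lc_off_pos {a b : Fin d} (hab : a ≠ b) (hs : 0 < P a + P b) :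
    Lc P P' c a b = 2 * (((P a - P b) / (P a + P b) : ℝ) : ℂ) * c a b := by
  simp [Lc, hab, hs]

lemma Lc_off_neg {a b : Fin d} (hab : a ≠ b) (hs : ¬ 0 < P a + P b) :
    Lc P P' c a b = 0 := by
  simp [Lc, hab, hs]

lemma cast_sum_ne {x y : ℝ} (h : 0 < x + y) : ((x : ℂ) + (y : ℂ)) ≠ 0 := by
  have : ((x + y : ℝ) : ℂ) ≠ 0 := by exact_mod_cast ne_of_gt h
  push_cast at this; exact this

lemma Lc_conj (hc : ∀ a b, c a b + (starRingEnd ℂ) (c b a) = 0) (a b : Fin d) :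
    star (Lc P P' c b a) = Lc P P' c a b := by
  rcases eq_or_ne a b with rfl | hab
  · by_cases hp : 0 < P a
    · rw [Lc_diag_pos hp, Complex.star_def, Complex.conj_ofReal]
    · rw [Lc_diag_neg hp, star_zero]
  · have hba : b ≠ a := hab.symm
    by_cases hs : 0 < P a + P b
    · have hs' : 0 < P b + P a := by linarith
      have hcb : (starRingEnd ℂ) (c b a) = - c a b := by linear_combination hc a b
      have hne := cast_sum_ne (x := P a) (y := P b) hs
      rw [Lc_off_pos hba hs', Lc_off_pos hab hs, Complex.star_def, map_mul, map_mul,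
        map_ofNat, Complex.conj_ofReal, hcb]
      have hne' := cast_sum_ne (x := P b) (y := P a) hs'
      push_cast
      field_simp [hne, hne']
      try ring
    · have hs' : ¬ 0 < P b + P a := by linarith
      rw [Lc_off_neg hba hs', Lc_off_neg hab hs, star_zero]

lemma key_half (hPnn : ∀ k, 0 ≤ P k) (hP'0 : ∀ k, ¬ 0 < P k → P' k = 0)
    (hc : ∀ a b, c a b + (starRingEnd ℂ) (c b a) = 0) (a b : Fin d) :
    (1/2 : ℂ) * ((P a : ℂ) * Lc P P' c a b + Lc P P' c a b * (P b : ℂ))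
      = (if a = b then ((P' a : ℝ) : ℂ) else 0)
        + (P b : ℂ) * (starRingEnd ℂ) (c b a) + (P a : ℂ) * c a b := by
  rcases eq_or_ne a b with rfl | hab
  · rw [if_pos rfl]
    have hcc : (starRingEnd ℂ) (c a a) = - c a a := by linear_combination hc a a
    rw [hcc]
    by_cases hp : 0 < P a
    · have hP : (P a : ℂ) ≠ 0 := by exact_mod_cast ne_of_gt hp
      rw [Lc_diag_pos hp]
      push_cast
      field_simp [hP]
      try ring
    · have h0 : P a = 0 := le_antisymm (not_lt.mp hp) (hPnn a)
      have h0' : P' a = 0 := hP'0 a hp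
      rw [Lc_diag_neg hp]
      simp [h0, h0']
  · rw [if_neg hab]
    have hcb : (starRingEnd ℂ) (c b a) = - c a b := by linear_combination hc a b
    rw [hcb]
    by_cases hs : 0 < P a + P b
    · have hne := cast_sum_ne (x := P a) (y := P b) hs
      have hne' := cast_sum_ne (x := P b) (y := P a) (by linarith)
      rw [Lc_off_pos hab hs]
      push_cast
      field_simp [hne, hne']
      try ring
    · have ha : P a = 0 := by nlinarith [hPnn a, hPnn b, not_lt.mp hs]
      have hb : P b = 0 := by nlinarith [hPnn a, hPnn b, not_lt.mp hs]
      rw [Lc_off_neg hab hs]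
      simp [ha, hb]

lemma trace_pointwise (hPnn : ∀ k, 0 ≤ P k)
    (hc : ∀ a b, c a b + (starRingEnd ℂ) (c b a) = 0) (a m : Fin d) :
    (P a : ℂ) * Lc P P' c a m * Lc P P' c m a
      = ((if a = m ∧ 0 < P a then (P' a) ^ 2 / P a else 0 : ℝ) : ℂ)
        + ((if a ≠ m ∧ 0 < P a + P m then
            4 * P a * ((P a - P m) / (P a + P m)) ^ 2 * ‖c a m‖ ^ 2
            else 0 : ℝ) : ℂ) := by
  rcases eq_or_ne a m with rfl | hne
  · rw [if_neg (show ¬(a ≠ a ∧ 0 < P a + P a) by simp)]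
    by_cases hp : 0 < P a
    · rw [Lc_diag_pos hp, if_pos ⟨rfl, hp⟩]
      have hP : (P a : ℂ) ≠ 0 := by exact_mod_cast ne_of_gt hp
      push_cast
      field_simp
      ring
    · rw [Lc_diag_neg hp, if_neg (fun h => hp h.2)]
      simp
  · have hma : m ≠ a := hne.symm
    rw [if_neg (fun h => hne h.1)]
    by_cases hs : 0 < P a + P m
    · have hs' : 0 < P m + P a := by linarith
      have hcm : c m a = -(starRingEnd ℂ) (c a m) := by linear_combination hc m a
      have hz : c a m * (starRingEnd ℂ) (c a m) = ((‖c a m‖ ^ 2 : ℝ) : ℂ) := by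
        rw [Complex.mul_conj, Complex.sq_norm]
      have hne0 := cast_sum_ne (x := P a) (y := P m) hs
      rw [Lc_off_pos hne hs, Lc_off_pos hma hs', hcm, if_pos ⟨hne, hs⟩]
      rw [show (P a : ℂ) * (2 * (((P a - P m) / (P a + P m) : ℝ) : ℂ) * c a m)
            * (2 * (((P m - P a) / (P m + P a) : ℝ) : ℂ) * -(starRingEnd ℂ) (c a m))
          = (-4 * (P a : ℂ) * (((P a - P m) / (P a + P m) : ℝ) : ℂ)
              * (((P m - P a) / (P m + P a) : ℝ) : ℂ))
            * (c a m * (starRingEnd ℂ) (c a m)) by ring, hz]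
      have hne0' := cast_sum_ne (x := P m) (y := P a) hs'
      push_cast
      field_simp [hne0, hne0']
      try ring
    · rw [Lc_off_neg hne hs, if_neg (fun h => hs h.2)]
      simp
lemma real_off (P : Fin d → ℝ) (A : Fin d → Fin d → ℝ)
    (hA : ∀ a m, A m a = A a m) :
    (∑ a, ∑ m, if a ≠ m ∧ 0 < P a + P m then
        4 * P a * ((P a - P m) / (P a + P m)) ^ 2 * A a m else 0)
      = 4 * ∑ j, ∑ k, (if j < k ∧ 0 < P j + P k then
          (P j - P k) ^ 2 / (P j + P k) * A j k else 0) := by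
  have hsplit : ∀ a m : Fin d,
      (if a ≠ m ∧ 0 < P a + P m then 4 * P a * ((P a - P m) / (P a + P m)) ^ 2 * A a m else 0)
      = (if a < m then (if 0 < P a + P m then 4 * P a * ((P a - P m) / (P a + P m)) ^ 2 * A a m else 0) else 0)
        + (if m < a then (if 0 < P a + P m then 4 * P a * ((P a - P m) / (P a + P m)) ^ 2 * A a m else 0) else 0) := by
    intro a m
    rcases lt_trichotomy a m with h | h | h
    · simp [h, ne_of_lt h, not_lt_of_gt h, and_comm]
    · simp [h]
    · simp [h, (ne_of_lt h).symm, not_lt_of_gt h]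
  calc (∑ a, ∑ m, if a ≠ m ∧ 0 < P a + P m then
        4 * P a * ((P a - P m) / (P a + P m)) ^ 2 * A a m else 0)
      = (∑ a, ∑ m, if a < m then (if 0 < P a + P m then 4 * P a * ((P a - P m) / (P a + P m)) ^ 2 * A a m else 0) else 0)
        + (∑ a, ∑ m, if m < a then (if 0 < P a + P m then 4 * P a * ((P a - P m) / (P a + P m)) ^ 2 * A a m else 0) else 0) := by
        rw [← Finset.sum_add_distrib]
        refine Finset.sum_congr rfl fun a _ => ?_
        rw [← Finset.sum_add_distrib]
        exact Finset.sum_congr rfl fun m _ => hsplit a m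
    _ = (∑ a, ∑ m, if a < m then (if 0 < P a + P m then 4 * P a * ((P a - P m) / (P a + P m)) ^ 2 * A a m else 0) else 0)
        + (∑ a, ∑ m, if a < m then (if 0 < P m + P a then 4 * P m * ((P m - P a) / (P m + P a)) ^ 2 * A m a else 0) else 0) := by
        congr 1
        rw [Finset.sum_comm]
    _ = ∑ a, ∑ m, if a < m then
          ((if 0 < P a + P m then 4 * P a * ((P a - P m) / (P a + P m)) ^ 2 * A a m else 0)
            + (if 0 < P m + P a then 4 * P m * ((P m - P a) / (P m + P a)) ^ 2 * A m a else 0)) else 0 := by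
        rw [← Finset.sum_add_distrib]
        refine Finset.sum_congr rfl fun a _ => ?_
        rw [← Finset.sum_add_distrib]
        refine Finset.sum_congr rfl fun m _ => ?_
        split <;> simp
    _ = 4 * ∑ j, ∑ k, (if j < k ∧ 0 < P j + P k then
          (P j - P k) ^ 2 / (P j + P k) * A j k else 0) := by
        rw [Finset.mul_sum]
        refine Finset.sum_congr rfl fun a _ => ?_
        rw [Finset.mul_sum]
        refine Finset.sum_congr rfl fun m _ => ?_
        rw [show (if a < m ∧ 0 < P a + P m then (P a - P m) ^ 2 / (P a + P m) * A a m else 0)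
            = (if a < m then (if 0 < P a + P m then (P a - P m) ^ 2 / (P a + P m) * A a m else 0) else 0) by
          rw [ite_and]]
        rw [mul_ite, mul_zero]
        refine if_congr Iff.rfl ?_ rfl
        by_cases hs : 0 < P a + P m
        · have hs' : 0 < P m + P a := by linarith
          rw [if_pos hs, if_pos hs', if_pos hs, hA a m]
          have h0 : P a + P m ≠ 0 := ne_of_gt hs
          field_simp
          ring
        · have hs' : ¬ 0 < P m + P a := by linarith
          rw [if_neg hs, if_neg hs', if_neg hs]
          simp
lemma trace_sum (hPnn : ∀ k, 0 ≤ P k)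
    (hc : ∀ a b, c a b + (starRingEnd ℂ) (c b a) = 0) :
    (∑ a, ∑ m, ((P a : ℂ) * Lc P P' c a m) * Lc P P' c m a)
      = (((∑ k, if 0 < P k then (P' k) ^ 2 / P k else 0)
          + 4 * ∑ j, ∑ k, (if j < k ∧ 0 < P j + P k then
              (P j - P k) ^ 2 / (P j + P k) * ‖c j k‖ ^ 2 else 0) : ℝ) : ℂ) := by
  have habs : ∀ a m : Fin d, ‖c m a‖ = ‖c a m‖ := by
    intro a m
    have h : c m a = -(starRingEnd ℂ) (c a m) := by linear_combination hc m a
    simp [h]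
  calc (∑ a, ∑ m, ((P a : ℂ) * Lc P P' c a m) * Lc P P' c m a)
      = ∑ a, ∑ m, (((if a = m ∧ 0 < P a then (P' a) ^ 2 / P a else 0 : ℝ) : ℂ)
          + ((if a ≠ m ∧ 0 < P a + P m then
              4 * P a * ((P a - P m) / (P a + P m)) ^ 2 * ‖c a m‖ ^ 2
              else 0 : ℝ) : ℂ)) := by
        exact Finset.sum_congr rfl fun a _ => Finset.sum_congr rfl fun m _ =>
          trace_pointwise hPnn hc a m
    _ = ((∑ a, ∑ m, (if a = m ∧ 0 < P a then (P' a) ^ 2 / P a else 0 : ℝ)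
          + ∑ a, ∑ m, (if a ≠ m ∧ 0 < P a + P m then
              4 * P a * ((P a - P m) / (P a + P m)) ^ 2 * ‖c a m‖ ^ 2
              else 0 : ℝ) : ℝ) : ℂ) := by
        push_cast
        rw [← Finset.sum_add_distrib]
        exact Finset.sum_congr rfl fun a _ => by rw [← Finset.sum_add_distrib]
    _ = (((∑ k, if 0 < P k then (P' k) ^ 2 / P k else 0)
          + 4 * ∑ j, ∑ k, (if j < k ∧ 0 < P j + P k then
              (P j - P k) ^ 2 / (P j + P k) * ‖c j k‖ ^ 2 else 0) : ℝ) : ℂ) := by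
        congr 1
        congr 1
        · refine Finset.sum_congr rfl fun a _ => ?_
          rw [show (∑ m, (if a = m ∧ 0 < P a then (P' a) ^ 2 / P a else 0 : ℝ))
              = ∑ m : Fin d, (if a = m then (if 0 < P a then (P' a) ^ 2 / P a else 0) else 0 : ℝ) from
            Finset.sum_congr rfl fun m _ => by rw [ite_and]]
          rw [Finset.sum_ite_eq]
          simp
        · exact real_off P _ fun a m => by rw [habs]
end SLDaux

namespace SLDmain
open SLDaux

theorem main_alg {d : ℕ} (u v : Fin d → Fin d → ℂ) (P P' : Fin d → ℝ)
    (horth : ∀ j k : Fin d, inn (u j) (u k) = if j = k then 1 else 0)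
    (hPnn : ∀ k, 0 ≤ P k)
    (hP'0 : ∀ k, ¬ 0 < P k → P' k = 0)
    (hanti : ∀ a b : Fin d, inn (v a) (u b) + (starRingEnd ℂ) (inn (v b) (u a)) = 0)
    (ρm lamm : Matrix (Fin d) (Fin d) ℂ)
    (hρm : ρm = ∑ k, (P k : ℂ) • Matrix.vecMulVec (u k) (star (u k)))
    (hlamm : lamm = (∑ k, if 0 < P k then
          ((P' k / P k : ℝ) : ℂ) • Matrix.vecMulVec (u k) (star (u k)) else 0)
      + (2 : ℂ) • ∑ j, ∑ k, (if j ≠ k ∧ 0 < P j + P k then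
          (((P j - P k) / (P j + P k) : ℝ) : ℂ) •
            inn (v j) (u k) • Matrix.vecMulVec (u j) (star (u k)) else 0)) :
    lamm.IsHermitian ∧
    ((1 / 2 : ℂ) • (ρm * lamm + lamm * ρm)
      = ∑ k, ((P' k : ℂ) • Matrix.vecMulVec (u k) (star (u k))
          + (P k : ℂ) • (Matrix.vecMulVec (v k) (star (u k))
              + Matrix.vecMulVec (u k) (star (v k))))) ∧
    (ρm * lamm * lamm).trace
      = (((∑ k, if 0 < P k then (P' k) ^ 2 / P k else 0)
          + 4 * ∑ j, ∑ k, (if j < k ∧ 0 < P j + P k then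
              (P j - P k) ^ 2 / (P j + P k) *
                ‖inn (v j) (u k)‖ ^ 2 else 0) : ℝ) : ℂ) := by
  have hc : ∀ a b : Fin d, (fun a b => inn (v a) (u b)) a b
      + (starRingEnd ℂ) ((fun a b => inn (v a) (u b)) b a) = 0 := hanti
  have hlam2 : lamm = ∑ a, ∑ b, Lc P P' (fun a b => inn (v a) (u b)) a b
      • Matrix.vecMulVec (u a) (star (u b)) := by
    simp only [Lc]
    rw [hlamm]
    rw [show (∑ k, if 0 < P k then
          ((P' k / P k : ℝ) : ℂ) • Matrix.vecMulVec (u k) (star (u k)) else 0)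
        = ∑ a, ∑ b, (if a = b ∧ 0 < P a then ((P' a / P a : ℝ) : ℂ) else 0)
            • Matrix.vecMulVec (u a) (star (u b)) by
      refine Finset.sum_congr rfl fun a _ => ?_
      rw [show (∑ b, (if a = b ∧ 0 < P a then ((P' a / P a : ℝ) : ℂ) else 0)
            • Matrix.vecMulVec (u a) (star (u b)))
          = ∑ b, (if a = b then (if 0 < P a then
              ((P' a / P a : ℝ) : ℂ) • Matrix.vecMulVec (u a) (star (u b)) else 0) else 0) from
        Finset.sum_congr rfl fun b _ => by rw [ite_and, ite_smul, zero_smul]; split <;> simp]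
      rw [Finset.sum_ite_eq]
      simp]
    rw [show ((2:ℂ) • ∑ j, ∑ k, (if j ≠ k ∧ 0 < P j + P k then
            (((P j - P k) / (P j + P k) : ℝ) : ℂ) •
              inn (v j) (u k) • Matrix.vecMulVec (u j) (star (u k)) else 0))
        = ∑ a, ∑ b, (if a ≠ b ∧ 0 < P a + P b then
              2 * (((P a - P b) / (P a + P b) : ℝ) : ℂ) * inn (v a) (u b) else 0)
            • Matrix.vecMulVec (u a) (star (u b)) by
      rw [Finset.smul_sum]
      refine Finset.sum_congr rfl fun a _ => ?_
      rw [Finset.smul_sum]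
      refine Finset.sum_congr rfl fun b _ => ?_
      rw [smul_ite, smul_zero, ite_smul, zero_smul]
      refine if_congr Iff.rfl ?_ rfl
      rw [smul_smul, smul_smul]]
    rw [← Finset.sum_add_distrib]
    refine Finset.sum_congr rfl fun a _ => ?_
    rw [← Finset.sum_add_distrib]
    exact Finset.sum_congr rfl fun b _ => by rw [add_smul]
  have hrho2 : ρm = ∑ a, ∑ b, (if a = b then (P a : ℂ) else 0)
      • Matrix.vecMulVec (u a) (star (u b)) := by
    rw [hρm]
    refine Finset.sum_congr rfl fun a _ => ?_
    rw [show (∑ b, (if a = b then (P a : ℂ) else 0) • Matrix.vecMulVec (u a) (star (u b)))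
        = ∑ b, (if a = b then (P a : ℂ) • Matrix.vecMulVec (u a) (star (u b)) else 0) from
      Finset.sum_congr rfl fun b _ => by rw [ite_smul, zero_smul]]
    rw [Finset.sum_ite_eq]
    simp
  have hrl : ρm * lamm = ∑ a, ∑ b,
      ((P a : ℂ) * Lc P P' (fun a b => inn (v a) (u b)) a b)
        • Matrix.vecMulVec (u a) (star (u b)) := by
    rw [hrho2, hlam2, Ecomp u horth]
    refine Finset.sum_congr rfl fun a _ => Finset.sum_congr rfl fun b _ => ?_
    congr 1
    simp only [ite_mul, zero_mul, Finset.sum_ite_eq, Finset.mem_univ, if_true]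
  have hlr : lamm * ρm = ∑ a, ∑ b,
      (Lc P P' (fun a b => inn (v a) (u b)) a b * (P b : ℂ))
        • Matrix.vecMulVec (u a) (star (u b)) := by
    rw [hrho2, hlam2, Ecomp u horth]
    refine Finset.sum_congr rfl fun a _ => Finset.sum_congr rfl fun b _ => ?_
    congr 1
    simp only [mul_ite, mul_zero, Finset.sum_ite_eq', Finset.mem_univ, if_true]
  refine ⟨?_, ?_, ?_⟩
  · show lammᴴ = lamm
    conv_lhs => rw [hlam2]
    conv_rhs => rw [hlam2]
    rw [Matrix.conjTranspose_sum]
    rw [show (∑ a, (∑ b, Lc P P' (fun a b => inn (v a) (u b)) a b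
          • Matrix.vecMulVec (u a) (star (u b)))ᴴ)
        = ∑ a, ∑ b, star (Lc P P' (fun a b => inn (v a) (u b)) a b)
            • Matrix.vecMulVec (u b) (star (u a)) from
      Finset.sum_congr rfl fun a _ => by
        rw [Matrix.conjTranspose_sum]
        exact Finset.sum_congr rfl fun b _ => by
          rw [Matrix.conjTranspose_smul, vmv_conjTranspose]]
    rw [Finset.sum_comm]
    exact Finset.sum_congr rfl fun a _ => Finset.sum_congr rfl fun b _ => by
      rw [Lc_conj hc]
  · calc (1 / 2 : ℂ) • (ρm * lamm + lamm * ρm)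
        = ∑ a, ∑ b, ((1/2 : ℂ) * ((P a : ℂ) * Lc P P' (fun a b => inn (v a) (u b)) a b
            + Lc P P' (fun a b => inn (v a) (u b)) a b * (P b : ℂ)))
          • Matrix.vecMulVec (u a) (star (u b)) := by
          rw [hrl, hlr, ← Finset.sum_add_distrib, Finset.smul_sum]
          refine Finset.sum_congr rfl fun a _ => ?_
          rw [← Finset.sum_add_distrib, Finset.smul_sum]
          refine Finset.sum_congr rfl fun b _ => ?_
          rw [← add_smul, smul_smul]
      _ = ∑ a, ∑ b, ((if a = b then ((P' a : ℝ) : ℂ) else 0)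
            + (P b : ℂ) * (starRingEnd ℂ) (inn (v b) (u a)) + (P a : ℂ) * inn (v a) (u b))
          • Matrix.vecMulVec (u a) (star (u b)) := by
          exact Finset.sum_congr rfl fun a _ => Finset.sum_congr rfl fun b _ => by
            rw [key_half hPnn hP'0 hc]
      _ = ∑ k, ((P' k : ℂ) • Matrix.vecMulVec (u k) (star (u k))
          + (P k : ℂ) • (Matrix.vecMulVec (v k) (star (u k))
              + Matrix.vecMulVec (u k) (star (v k)))) := by
          symm
          calc ∑ k, ((P' k : ℂ) • Matrix.vecMulVec (u k) (star (u k))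
              + (P k : ℂ) • (Matrix.vecMulVec (v k) (star (u k))
                  + Matrix.vecMulVec (u k) (star (v k))))
              = (∑ k, (P' k : ℂ) • Matrix.vecMulVec (u k) (star (u k)))
                + ((∑ k, (P k : ℂ) • Matrix.vecMulVec (v k) (star (u k)))
                  + (∑ k, (P k : ℂ) • Matrix.vecMulVec (u k) (star (v k)))) := by
                rw [← Finset.sum_add_distrib, ← Finset.sum_add_distrib]
                exact Finset.sum_congr rfl fun k _ => by rw [smul_add]
            _ = (∑ a, ∑ b, (if a = b then ((P' a : ℝ) : ℂ) else 0)
                  • Matrix.vecMulVec (u a) (star (u b)))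
                + ((∑ a, ∑ b, ((P b : ℂ) * inn (u a) (v b))
                    • Matrix.vecMulVec (u a) (star (u b)))
                  + (∑ a, ∑ b, ((P a : ℂ) * (starRingEnd ℂ) (inn (u b) (v a)))
                    • Matrix.vecMulVec (u a) (star (u b)))) := by
                congr 1
                · refine Finset.sum_congr rfl fun a _ => ?_
                  rw [show (∑ b, (if a = b then ((P' a : ℝ) : ℂ) else 0)
                        • Matrix.vecMulVec (u a) (star (u b)))
                      = ∑ b, (if a = b then ((P' a : ℝ) : ℂ)
                          • Matrix.vecMulVec (u a) (star (u b)) else 0) from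
                    Finset.sum_congr rfl fun b _ => by rw [ite_smul, zero_smul]]
                  rw [Finset.sum_ite_eq]
                  simp
                congr 1
                · calc (∑ k, (P k : ℂ) • Matrix.vecMulVec (v k) (star (u k)))
                      = ∑ k, ∑ m, ((P k : ℂ) * inn (u m) (v k))
                          • Matrix.vecMulVec (u m) (star (u k)) := by
                        refine Finset.sum_congr rfl fun k _ => ?_
                        rw [expandA u horth (v k) (u k), Finset.smul_sum]
                        exact Finset.sum_congr rfl fun m _ => by rw [smul_smul]
                    _ = ∑ a, ∑ b, ((P b : ℂ) * inn (u a) (v b))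
                          • Matrix.vecMulVec (u a) (star (u b)) := Finset.sum_comm
                · refine Finset.sum_congr rfl fun k _ => ?_
                  rw [expandB u horth (u k) (v k), Finset.smul_sum]
                  exact Finset.sum_congr rfl fun m _ => by rw [smul_smul]
            _ = ∑ a, ∑ b, ((if a = b then ((P' a : ℝ) : ℂ) else 0)
                  + (P b : ℂ) * (starRingEnd ℂ) (inn (v b) (u a))
                  + (P a : ℂ) * inn (v a) (u b))
                • Matrix.vecMulVec (u a) (star (u b)) := by
                rw [← Finset.sum_add_distrib, ← Finset.sum_add_distrib]
                refine Finset.sum_congr rfl fun a _ => ?_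
                rw [← Finset.sum_add_distrib, ← Finset.sum_add_distrib]
                refine Finset.sum_congr rfl fun b _ => ?_
                rw [← add_smul, ← add_smul]
                congr 1
                rw [inn_conj (u a) (v b), inn_conj (v a) (u b)]
                ring
  · rw [hrl, hlam2, Ecomp u horth, Etrace u horth]
    exact trace_sum hPnn hc
end SLDmain

/-- **Explicit SLD and the value of the SLD quantum information.**
The matrix `λ̃_θ` is Hermitian, solves the SLD equation
`dρ_θ/dθ = (1/2)(ρ_θ λ̃_θ + λ̃_θ ρ_θ)` (entrywise), and `tr(ρ_θ λ̃_θ²) = H(θ)`. -/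
theorem explicit_sld {d : ℕ} (hd : 1 ≤ d)
    (p : Fin d → ℝ → ℝ) (w : Fin d → ℝ → (Fin d → ℂ))
    (p' : Fin d → ℝ → ℝ) (w' : Fin d → ℝ → (Fin d → ℂ))
    (horth : ∀ θ (j k : Fin d), inn (w j θ) (w k θ) = if j = k then 1 else 0)
    (hpnn : ∀ (k : Fin d) θ, 0 ≤ p k θ) (hpsum : ∀ θ, ∑ k, p k θ = 1)
    (hp' : ∀ (k : Fin d) θ, HasDerivAt (p k) (p' k θ) θ)
    (hw' : ∀ (k : Fin d) θ, HasDerivAt (w k) (w' k θ) θ)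
    (hdich : ∀ k : Fin d, (∀ θ, 0 < p k θ) ∨ (∀ θ, p k θ = 0))
    (ρ : ℝ → Matrix (Fin d) (Fin d) ℂ)
    (hρ : ∀ θ, ρ θ = ∑ k, (p k θ : ℂ) • Matrix.vecMulVec (w k θ) (star (w k θ)))
    (lamt : ℝ → Matrix (Fin d) (Fin d) ℂ)
    (hlamt : ∀ θ, lamt θ =
      (∑ k, if 0 < p k θ then
          ((p' k θ / p k θ : ℝ) : ℂ) • Matrix.vecMulVec (w k θ) (star (w k θ)) else 0)
      + (2 : ℂ) • ∑ j, ∑ k, (if j ≠ k ∧ 0 < p j θ + p k θ then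
          (((p j θ - p k θ) / (p j θ + p k θ) : ℝ) : ℂ) •
            inn (w' j θ) (w k θ) • Matrix.vecMulVec (w j θ) (star (w k θ)) else 0)) :
    ∀ θ : ℝ,
      (lamt θ).IsHermitian ∧
      (∀ i j : Fin d, HasDerivAt (fun t => ρ t i j)
          (((1 / 2 : ℂ) • (ρ θ * lamt θ + lamt θ * ρ θ)) i j) θ) ∧
      (ρ θ * lamt θ * lamt θ).trace =
        (((∑ k, if 0 < p k θ then (p' k θ) ^ 2 / p k θ else 0)
          + 4 * ∑ j, ∑ k, (if j < k ∧ 0 < p j θ + p k θ then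
              (p j θ - p k θ) ^ 2 / (p j θ + p k θ) *
                ‖inn (w' j θ) (w k θ)‖ ^ 2 else 0) : ℝ) : ℂ) := by
  intro θ
  have hP'0 : ∀ k : Fin d, ¬ 0 < p k θ → p' k θ = 0 := by
    intro k hk
    rcases hdich k with h | h
    · exact absurd (h θ) hk
    · have hzero : HasDerivAt (p k) 0 θ := by
        have hpk : p k = fun _ => (0 : ℝ) := funext h
        rw [hpk]
        exact hasDerivAt_const _ _
      exact (hp' k θ).unique hzero
  have hanti : ∀ a b : Fin d,
      inn (w' a θ) (w b θ) + (starRingEnd ℂ) (inn (w' b θ) (w a θ)) = 0 := by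
    intro a b
    have hterm : ∀ i : Fin d, HasDerivAt (fun t => (starRingEnd ℂ) (w a t i) * w b t i)
        ((starRingEnd ℂ) (w' a θ i) * w b θ i + (starRingEnd ℂ) (w a θ i) * w' b θ i) θ := by
      intro i
      have h1 : HasDerivAt (fun t => w a t i) (w' a θ i) θ := hasDerivAt_pi.mp (hw' a θ) i
      have h2 : HasDerivAt (fun t => w b t i) (w' b θ i) θ := hasDerivAt_pi.mp (hw' b θ) i
      have h3 := h1.star.fun_mul h2
      simpa only [starRingEnd_apply] using h3
    have hsum : HasDerivAt (fun t => inn (w a t) (w b t))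
        (∑ i, ((starRingEnd ℂ) (w' a θ i) * w b θ i
          + (starRingEnd ℂ) (w a θ i) * w' b θ i)) θ := by
      have := HasDerivAt.fun_sum (fun i (_ : i ∈ Finset.univ) => hterm i)
      simpa only [inn] using this
    have hconst : HasDerivAt (fun t => inn (w a t) (w b t)) 0 θ := by
      have he : (fun t => inn (w a t) (w b t)) = fun _ => (if a = b then (1:ℂ) else 0) :=
        funext fun t => horth t a b
      rw [he]
      exact hasDerivAt_const _ _
    have hval : (∑ i, ((starRingEnd ℂ) (w' a θ i) * w b θ i
          + (starRingEnd ℂ) (w a θ i) * w' b θ i))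
        = inn (w' a θ) (w b θ) + (starRingEnd ℂ) (inn (w' b θ) (w a θ)) := by
      rw [Finset.sum_add_distrib]
      congr 1
      simp [inn, map_sum, mul_comm]
    rw [← hval]
    exact hsum.unique hconst
  obtain ⟨h1, h2, h3⟩ := SLDmain.main_alg (fun k => w k θ) (fun k => w' k θ)
    (fun k => p k θ) (fun k => p' k θ) (horth θ) (fun k => hpnn k θ) hP'0 hanti
    (ρ θ) (lamt θ) (hρ θ) (hlamt θ)
  refine ⟨h1, ?_, h3⟩
  intro i j
  rw [h2]
  have hentry : (∑ k, (((p' k θ : ℝ) : ℂ)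
        • Matrix.vecMulVec (w k θ) (star (w k θ))
      + ((p k θ : ℝ) : ℂ) • (Matrix.vecMulVec (w' k θ) (star (w k θ))
          + Matrix.vecMulVec (w k θ) (star (w' k θ))))) i j
      = ∑ k, ((p' k θ : ℂ) * (w k θ i * star (w k θ j))
          + (p k θ : ℂ) * (w' k θ i * star (w k θ j) + w k θ i * star (w' k θ j))) := by
    simp [Matrix.sum_apply, Matrix.vecMulVec_apply, mul_add]
  rw [hentry]
  have hfun : (fun t => ρ t i j)
      = fun t => ∑ k, (p k t : ℂ) * (w k t i * star (w k t j)) := by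
    funext t
    rw [hρ t]
    simp [Matrix.sum_apply, Matrix.vecMulVec_apply]
  rw [hfun]
  refine HasDerivAt.fun_sum fun k _ => ?_
  have hp0 : HasDerivAt (fun t => (p k t : ℂ)) ((p' k θ : ℝ) : ℂ) θ :=
    (hp' k θ).ofReal_comp
  have hw1 : HasDerivAt (fun t => w k t i) (w' k θ i) θ := hasDerivAt_pi.mp (hw' k θ) i
  have hw2 : HasDerivAt (fun t => star (w k t j)) (star (w' k θ j)) θ :=
    (hasDerivAt_pi.mp (hw' k θ) j).star
  exact hp0.fun_mul (hw1.fun_mul hw2)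
end
end

section
/- The SLD quantum information is bounded by the Sarovar–Milburn bound (Theorem): In the spectral-family setup, C_Υ(θ) − H(θ) = 8 Σ over pairs (j,k) with p_j(θ) > 0 and p_k(θ) > 0 of (p_j(θ) p_k(θ)/(p_j(θ)+p_k(θ))) |⟨w_j'(θ), w_k(θ)⟩|². In particular H(θ) ≤ C_Υ(θ), with equality if and only if ⟨w_j'(θ), w_k(θ)⟩ = 0 for all j,k with p_j(θ) > 0 and p_k(θ) > 0. -/
open scoped BigOperators

noncomputable section

lemma inn_conj {d : ℕ} (x y : Fin d → ℂ) : (starRingEnd ℂ) (inn x y) = inn y x := by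
  simp only [inn, map_sum, map_mul, RingHomCompTriple.comp_apply, RingHom.id_apply,
    Complex.conj_conj]
  exact Finset.sum_congr rfl fun i _ => mul_comm _ _

lemma hasDerivAt_inn {d : ℕ} (f g : ℝ → (Fin d → ℂ)) (f' g' : Fin d → ℂ) (θ : ℝ)
    (hf : HasDerivAt f f' θ) (hg : HasDerivAt g g' θ) :
    HasDerivAt (fun t => inn (f t) (g t)) (inn f' (g θ) + inn (f θ) g') θ := by
  have h : ∀ i : Fin d, HasDerivAt (fun t => star (f t i) * g t i)
      (star (f' i) * g θ i + star (f θ i) * g' i) θ := fun i =>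
    (hasDerivAt_pi.mp hf i).star.mul (hasDerivAt_pi.mp hg i)
  have hsum := HasDerivAt.fun_sum (fun i (_ : i ∈ Finset.univ) => h i)
  have e1 : (fun t => ∑ i, star (f t i) * g t i) = fun t => inn (f t) (g t) := by
    funext t; simp only [inn, starRingEnd_apply]
  have e2 : (∑ i, (star (f' i) * g θ i + star (f θ i) * g' i))
      = inn f' (g θ) + inn (f θ) g' := by
    simp only [inn, starRingEnd_apply, Finset.sum_add_distrib]
  rw [e1, e2] at hsum
  exact hsum

lemma double_sum_split {d : ℕ} (T : Fin d → Fin d → ℝ) (hsymm : ∀ j k, T j k = T k j) :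
    ∑ j, ∑ k, T j k = 2 * (∑ j, ∑ k, if j < k then T j k else 0) + ∑ k, T k k := by
  have tri : ∀ j k : Fin d, T j k = (if j < k then T j k else 0)
      + (if k < j then T j k else 0) + (if j = k then T j k else 0) := by
    intro j k
    rcases lt_trichotomy j k with h | h | h
    · simp [h, asymm h, h.ne]
    · simp [h]
    · simp [h, asymm h, h.ne']
  have h2 : ∑ j, ∑ k, (if k < j then T j k else 0)
      = ∑ j, ∑ k, (if j < k then T j k else 0) := by
    rw [Finset.sum_comm]
    exact Finset.sum_congr rfl fun j _ => Finset.sum_congr rfl fun k _ => by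
      simp only [hsymm j k]
  have h3 : ∑ j, ∑ k : Fin d, (if j = k then T j k else 0) = ∑ k, T k k :=
    Finset.sum_congr rfl fun j _ => by simp
  calc ∑ j, ∑ k, T j k
      = ∑ j, ∑ k, ((if j < k then T j k else 0) + (if k < j then T j k else 0)
          + (if j = k then T j k else 0)) :=
        Finset.sum_congr rfl fun j _ => Finset.sum_congr rfl fun k _ => tri j k
    _ = _ := by
        simp only [Finset.sum_add_distrib, h2, h3]; ring

/-- **The SLD quantum information is bounded by the Sarovar–Milburn bound.**
`C_Υ(θ) − H(θ)` equals the displayed nonnegative sum; in particular `H(θ) ≤ C_Υ(θ)`,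
with equality iff `⟨w_j'(θ), w_k(θ)⟩ = 0` whenever `p_j(θ) > 0` and `p_k(θ) > 0`. -/
theorem sld_le_sarovar_milburn {d : ℕ} (hd : 1 ≤ d)
    (p : Fin d → ℝ → ℝ) (w : Fin d → ℝ → (Fin d → ℂ))
    (p' : Fin d → ℝ → ℝ) (w' : Fin d → ℝ → (Fin d → ℂ))
    (horth : ∀ θ (j k : Fin d), inn (w j θ) (w k θ) = if j = k then 1 else 0)
    (hpnn : ∀ (k : Fin d) θ, 0 ≤ p k θ) (hpsum : ∀ θ, ∑ k, p k θ = 1)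
    (hp' : ∀ (k : Fin d) θ, HasDerivAt (p k) (p' k θ) θ)
    (hw' : ∀ (k : Fin d) θ, HasDerivAt (w k) (w' k θ) θ)
    (hdich : ∀ k : Fin d, (∀ θ, 0 < p k θ) ∨ (∀ θ, p k θ = 0))
    (C H : ℝ → ℝ)
    (hC : ∀ θ, C θ = (∑ k, if 0 < p k θ then (p' k θ) ^ 2 / p k θ else 0)
        + 4 * ∑ j, ∑ k, (if j < k ∧ 0 < p j θ + p k θ then
            (p j θ + p k θ) * ‖inn (w' j θ) (w k θ)‖ ^ 2 else 0)
        + 4 * ∑ k, (if 0 < p k θ then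
            p k θ * ‖inn (w' k θ) (w k θ)‖ ^ 2 else 0))
    (hH : ∀ θ, H θ = (∑ k, if 0 < p k θ then (p' k θ) ^ 2 / p k θ else 0)
        + 4 * ∑ j, ∑ k, (if j < k ∧ 0 < p j θ + p k θ then
            (p j θ - p k θ) ^ 2 / (p j θ + p k θ) *
              ‖inn (w' j θ) (w k θ)‖ ^ 2 else 0)) :
    ∀ θ : ℝ,
      (C θ - H θ = 8 * ∑ j, ∑ k, (if 0 < p j θ ∧ 0 < p k θ then
          p j θ * p k θ / (p j θ + p k θ) *
            ‖inn (w' j θ) (w k θ)‖ ^ 2 else 0)) ∧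
      H θ ≤ C θ ∧
      (H θ = C θ ↔ ∀ j k : Fin d, 0 < p j θ → 0 < p k θ → inn (w' j θ) (w k θ) = 0) := by
  intro θ
  -- symmetry of |⟨w_j', w_k⟩| via differentiating orthonormality
  have hsymm : ∀ j k : Fin d,
      ‖inn (w' k θ) (w j θ)‖ = ‖inn (w' j θ) (w k θ)‖ := by
    intro j k
    have h1 := hasDerivAt_inn (w j) (w k) (w' j θ) (w' k θ) θ (hw' j θ) (hw' k θ)
    have h0 : HasDerivAt (fun t => inn (w j t) (w k t)) 0 θ := by
      have he : (fun t => inn (w j t) (w k t)) = fun _ => (if j = k then (1:ℂ) else 0) :=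
        funext fun t => horth t j k
      rw [he]; exact hasDerivAt_const θ _
    have heq : inn (w' j θ) (w k θ) + inn (w j θ) (w' k θ) = 0 := h1.unique h0
    have h2 : inn (w' j θ) (w k θ) = -(starRingEnd ℂ) (inn (w' k θ) (w j θ)) := by
      rw [inn_conj]
      linear_combination heq
    rw [h2]
    simp [Complex.norm_conj]
  -- symmetry of the summand
  have hTsymm : ∀ j k : Fin d,
      (if 0 < p j θ ∧ 0 < p k θ then p j θ * p k θ / (p j θ + p k θ) *
          ‖inn (w' j θ) (w k θ)‖ ^ 2 else 0)
      = (if 0 < p k θ ∧ 0 < p j θ then p k θ * p j θ / (p k θ + p j θ) *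
          ‖inn (w' k θ) (w j θ)‖ ^ 2 else 0) := by
    intro j k
    by_cases hp : 0 < p j θ ∧ 0 < p k θ
    · rw [if_pos hp, if_pos ⟨hp.2, hp.1⟩, hsymm j k]; ring
    · rw [if_neg hp, if_neg (fun h => hp ⟨h.2, h.1⟩)]
  -- expand C - H
  have e0 : C θ - H θ
      = 4 * ∑ j, ∑ k, ((if j < k ∧ 0 < p j θ + p k θ then
            (p j θ + p k θ) * ‖inn (w' j θ) (w k θ)‖ ^ 2 else 0)
          - (if j < k ∧ 0 < p j θ + p k θ then
            (p j θ - p k θ) ^ 2 / (p j θ + p k θ) *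
              ‖inn (w' j θ) (w k θ)‖ ^ 2 else 0))
        + 4 * ∑ k, (if 0 < p k θ then
            p k θ * ‖inn (w' k θ) (w k θ)‖ ^ 2 else 0) := by
    rw [hC θ, hH θ]
    simp only [Finset.sum_sub_distrib]
    ring
  -- termwise identity for the off-diagonal part
  have key : ∀ j k : Fin d,
      (if j < k ∧ 0 < p j θ + p k θ then
          (p j θ + p k θ) * ‖inn (w' j θ) (w k θ)‖ ^ 2 else 0)
        - (if j < k ∧ 0 < p j θ + p k θ then
          (p j θ - p k θ) ^ 2 / (p j θ + p k θ) *
            ‖inn (w' j θ) (w k θ)‖ ^ 2 else 0)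
      = 4 * (if j < k then (if 0 < p j θ ∧ 0 < p k θ then
          p j θ * p k θ / (p j θ + p k θ) *
            ‖inn (w' j θ) (w k θ)‖ ^ 2 else 0) else 0) := by
    intro j k
    by_cases hjk : j < k
    · by_cases hs : 0 < p j θ + p k θ
      · have hne : p j θ + p k θ ≠ 0 := ne_of_gt hs
        have hval : (p j θ + p k θ) - (p j θ - p k θ) ^ 2 / (p j θ + p k θ)
            = 4 * (p j θ * p k θ / (p j θ + p k θ)) := by
          field_simp
          ring
        simp only [hjk, hs, and_self, if_true, true_and]
        by_cases hp : 0 < p j θ ∧ 0 < p k θ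
        · rw [if_pos hp]
          linear_combination (‖inn (w' j θ) (w k θ)‖ ^ 2) * hval
        · rw [if_neg hp]
          have h0 : p j θ * p k θ = 0 := by
            rcases not_and_or.mp hp with h | h
            · exact mul_eq_zero.2 (Or.inl (((hpnn j θ).antisymm (not_lt.mp h)).symm))
            · exact mul_eq_zero.2 (Or.inr (((hpnn k θ).antisymm (not_lt.mp h)).symm))
          linear_combination (‖inn (w' j θ) (w k θ)‖ ^ 2) * hval
            + (4 * ‖inn (w' j θ) (w k θ)‖ ^ 2 / (p j θ + p k θ)) * h0
      · have hj0 : p j θ = 0 := by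
          have := not_lt.mp hs
          have := hpnn j θ
          have := hpnn k θ
          linarith
        have hk0 : p k θ = 0 := by
          have := not_lt.mp hs
          have := hpnn j θ
          have := hpnn k θ
          linarith
        simp [hj0, hk0, lt_irrefl]
    · simp [hjk]
  -- termwise identity for the diagonal part
  have keyd : ∀ k : Fin d,
      (if 0 < p k θ then p k θ * ‖inn (w' k θ) (w k θ)‖ ^ 2 else 0)
      = 2 * (if 0 < p k θ ∧ 0 < p k θ then p k θ * p k θ / (p k θ + p k θ) *
          ‖inn (w' k θ) (w k θ)‖ ^ 2 else 0) := by
    intro k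
    by_cases hk : 0 < p k θ
    · have hne : p k θ + p k θ ≠ 0 := by positivity
      simp only [hk, and_self, if_true]
      field_simp
      ring
    · simp [hk]
  have s1 : ∑ j, ∑ k, ((if j < k ∧ 0 < p j θ + p k θ then
          (p j θ + p k θ) * ‖inn (w' j θ) (w k θ)‖ ^ 2 else 0)
        - (if j < k ∧ 0 < p j θ + p k θ then
          (p j θ - p k θ) ^ 2 / (p j θ + p k θ) *
            ‖inn (w' j θ) (w k θ)‖ ^ 2 else 0))
      = 4 * ∑ j, ∑ k, (if j < k then (if 0 < p j θ ∧ 0 < p k θ then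
          p j θ * p k θ / (p j θ + p k θ) *
            ‖inn (w' j θ) (w k θ)‖ ^ 2 else 0) else 0) := by
    rw [Finset.mul_sum]
    refine Finset.sum_congr rfl fun j _ => ?_
    rw [Finset.mul_sum]
    exact Finset.sum_congr rfl fun k _ => key j k
  have s2 : ∑ k, (if 0 < p k θ then
        p k θ * ‖inn (w' k θ) (w k θ)‖ ^ 2 else 0)
      = 2 * ∑ k, (if 0 < p k θ ∧ 0 < p k θ then p k θ * p k θ / (p k θ + p k θ) *
          ‖inn (w' k θ) (w k θ)‖ ^ 2 else 0) := by
    rw [Finset.mul_sum]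
    exact Finset.sum_congr rfl fun k _ => keyd k
  have hsplit := double_sum_split
    (fun j k => if 0 < p j θ ∧ 0 < p k θ then p j θ * p k θ / (p j θ + p k θ) *
        ‖inn (w' j θ) (w k θ)‖ ^ 2 else 0) hTsymm
  beta_reduce at hsplit
  -- main identity
  have hmain : C θ - H θ = 8 * ∑ j, ∑ k, (if 0 < p j θ ∧ 0 < p k θ then
      p j θ * p k θ / (p j θ + p k θ) *
        ‖inn (w' j θ) (w k θ)‖ ^ 2 else 0) := by
    rw [e0, s1, s2, hsplit]
    ring
  -- nonnegativity of each term
  have hterm_nn : ∀ j k : Fin d, 0 ≤ (if 0 < p j θ ∧ 0 < p k θ then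
      p j θ * p k θ / (p j θ + p k θ) *
        ‖inn (w' j θ) (w k θ)‖ ^ 2 else 0) := by
    intro j k
    split_ifs with h
    · exact mul_nonneg (div_nonneg (mul_nonneg (hpnn j θ) (hpnn k θ))
        (add_nonneg (hpnn j θ) (hpnn k θ))) (by positivity)
    · exact le_refl 0
  have hS_nn : 0 ≤ ∑ j, ∑ k, (if 0 < p j θ ∧ 0 < p k θ then
      p j θ * p k θ / (p j θ + p k θ) *
        ‖inn (w' j θ) (w k θ)‖ ^ 2 else 0) :=
    Finset.sum_nonneg fun j _ => Finset.sum_nonneg fun k _ => hterm_nn j k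
  refine ⟨hmain, by linarith, ?_⟩
  constructor
  · intro hHC j k hj hk
    have hS0 : ∑ j, ∑ k, (if 0 < p j θ ∧ 0 < p k θ then
        p j θ * p k θ / (p j θ + p k θ) *
          ‖inn (w' j θ) (w k θ)‖ ^ 2 else 0) = 0 := by
      rw [hHC, sub_self] at hmain
      linarith
    have h1 := (Finset.sum_eq_zero_iff_of_nonneg
      (fun j _ => Finset.sum_nonneg fun k _ => hterm_nn j k)).mp hS0 j (Finset.mem_univ j)
    have h2 := (Finset.sum_eq_zero_iff_of_nonneg
      (fun k _ => hterm_nn j k)).mp h1 k (Finset.mem_univ k)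
    rw [if_pos ⟨hj, hk⟩] at h2
    have hc : 0 < p j θ * p k θ / (p j θ + p k θ) :=
      div_pos (mul_pos hj hk) (by linarith)
    have hA0 : ‖inn (w' j θ) (w k θ)‖ ^ 2 = 0 := by
      rcases mul_eq_zero.mp h2 with h | h
      · exact absurd h hc.ne'
      · exact h
    have habs : ‖inn (w' j θ) (w k θ)‖ = 0 := by
      nlinarith [norm_nonneg (inn (w' j θ) (w k θ))]
    exact norm_eq_zero.mp habs
  · intro hz
    have hS0 : ∑ j, ∑ k, (if 0 < p j θ ∧ 0 < p k θ then
        p j θ * p k θ / (p j θ + p k θ) *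
          ‖inn (w' j θ) (w k θ)‖ ^ 2 else 0) = 0 :=
      Finset.sum_eq_zero fun j _ => Finset.sum_eq_zero fun k _ => by
        split_ifs with h
        · rw [hz j k h.1 h.2]
          simp
        · rfl
    rw [hS0, mul_zero] at hmain
    linarith
end
end

section
/- Multi-parameter bound of the SLD information by the Sarovar–Milburn bound (Theorem): In the multi-parameter spectral-family setup, for every θ ∈ ℝ^p the matrix C_Υ(θ) − H(θ) is positive semidefinite, i.e. H(θ) ≤ C_Υ(θ) in the Loewner order; moreover H(θ) = C_Υ(θ) if and only if ⟨w_j^{(l)}(θ), w_k(θ)⟩ = 0 for all l ∈ {1,…,p} and all j,k with p_j(θ) > 0 and p_k(θ) > 0. -/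
open scoped BigOperators

noncomputable section

lemma inn_comm {d : ℕ} (x y : Fin d → ℂ) : inn x y = (starRingEnd ℂ) (inn y x) := by
  simp [inn, map_sum, mul_comm]

lemma quad_aux {n : ℕ} {ι : Type*} [Fintype ι] (x : Fin n → ℝ) (c : ι → ℝ)
    (P : ι → Prop) [DecidablePred P] (a : ι → Fin n → ℂ) :
    ∑ k, ∑ l, x k * x l *
        (∑ i, if P i then ((c i : ℝ) : ℂ) * a i k * (starRingEnd ℂ) (a i l) else 0).re
      = ∑ i, if P i then c i * Complex.normSq (∑ k, (x k : ℂ) * a i k) else 0 := by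
  have h1 : ∀ k l : Fin n, x k * x l *
      (∑ i, if P i then ((c i : ℝ):ℂ) * a i k * (starRingEnd ℂ) (a i l) else 0).re
      = (∑ i, if P i then ((x k * x l : ℝ):ℂ) * (((c i : ℝ):ℂ) * a i k * (starRingEnd ℂ) (a i l)) else 0).re := by
    intro k l
    rw [← Complex.re_ofReal_mul, Finset.mul_sum]
    congr 1
    refine Finset.sum_congr rfl fun i _ => ?_
    split <;> simp
  simp only [h1, ← Complex.re_sum]
  have h2 : (∑ k, ∑ l, ∑ i, if P i then ((x k * x l : ℝ):ℂ) * (((c i : ℝ):ℂ) * a i k * (starRingEnd ℂ) (a i l)) else 0)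
      = ∑ i, ∑ k, ∑ l, if P i then ((x k * x l : ℝ):ℂ) * (((c i : ℝ):ℂ) * a i k * (starRingEnd ℂ) (a i l)) else 0 := by
    calc (∑ k, ∑ l, ∑ i, if P i then ((x k * x l : ℝ):ℂ) * (((c i : ℝ):ℂ) * a i k * (starRingEnd ℂ) (a i l)) else 0)
        = ∑ k, ∑ i, ∑ l, if P i then ((x k * x l : ℝ):ℂ) * (((c i : ℝ):ℂ) * a i k * (starRingEnd ℂ) (a i l)) else 0 :=
          Finset.sum_congr rfl fun k _ => Finset.sum_comm
      _ = ∑ i, ∑ k, ∑ l, if P i then ((x k * x l : ℝ):ℂ) * (((c i : ℝ):ℂ) * a i k * (starRingEnd ℂ) (a i l)) else 0 :=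
          Finset.sum_comm
  rw [h2, Complex.re_sum]
  refine Finset.sum_congr rfl fun i _ => ?_
  by_cases hP : P i
  · simp only [if_pos hP]
    have hconjS : (starRingEnd ℂ) (∑ k, (x k : ℂ) * a i k) = ∑ l, (x l : ℂ) * (starRingEnd ℂ) (a i l) := by
      simp [map_sum, map_mul, Complex.conj_ofReal]
    have h3 : (∑ k, ∑ l, ((x k * x l : ℝ):ℂ) * (((c i : ℝ):ℂ) * a i k * (starRingEnd ℂ) (a i l)))
        = ((c i : ℝ):ℂ) * ((∑ k, (x k : ℂ) * a i k) * (starRingEnd ℂ) (∑ k, (x k : ℂ) * a i k)) := by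
      rw [hconjS, Finset.sum_mul_sum, Finset.mul_sum]
      refine Finset.sum_congr rfl fun k _ => ?_
      rw [Finset.mul_sum]
      refine Finset.sum_congr rfl fun l _ => ?_
      push_cast
      ring
    rw [h3, Complex.mul_conj, ← Complex.ofReal_mul]
    exact Complex.ofReal_re _
  · simp [hP]

/-- **Multi-parameter bound of the SLD information by the Sarovar–Milburn bound.**
`C_Υ(θ) − H(θ)` is positive semidefinite, with equality `H(θ) = C_Υ(θ)` iff
`⟨w_j^{(l)}(θ), w_k(θ)⟩ = 0` for all `l` and all `j, k` with `p_j(θ), p_k(θ) > 0`. -/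
theorem multiparam_sld_le_sarovar_milburn {d n : ℕ} (hd : 1 ≤ d) (hn : 1 ≤ n)
    (p : Fin d → (Fin n → ℝ) → ℝ) (w : Fin d → (Fin n → ℝ) → (Fin d → ℂ))
    (pd : Fin d → Fin n → (Fin n → ℝ) → ℝ)
    (wd : Fin d → Fin n → (Fin n → ℝ) → (Fin d → ℂ))
    (horth : ∀ θ (i j : Fin d), inn (w i θ) (w j θ) = if i = j then 1 else 0)
    (hpnn : ∀ (i : Fin d) θ, 0 ≤ p i θ) (hpsum : ∀ θ, ∑ i, p i θ = 1)
    (hpd : ∀ (i : Fin d) (k : Fin n) θ,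
      HasDerivAt (fun t => p i (Function.update θ k t)) (pd i k θ) (θ k))
    (hwd : ∀ (i : Fin d) (k : Fin n) θ,
      HasDerivAt (fun t => w i (Function.update θ k t)) (wd i k θ) (θ k))
    (hpdC : ∀ i : Fin d, Continuous fun θ k => pd i k θ)
    (hwdC : ∀ i : Fin d, Continuous fun θ k => wd i k θ)
    (hdich : ∀ i : Fin d, (∀ θ, 0 < p i θ) ∨ (∀ θ, p i θ = 0))
    (C H : (Fin n → ℝ) → Matrix (Fin n) (Fin n) ℝ)
    (hC : ∀ θ (k l : Fin n), C θ k l =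
        (∑ i, if 0 < p i θ then pd i k θ * pd i l θ / p i θ else 0)
        + 4 * (∑ i, ∑ j, if i < j ∧ 0 < p i θ + p j θ then
            ((p i θ + p j θ : ℝ) : ℂ) * inn (wd i k θ) (w j θ) * inn (w j θ) (wd i l θ)
            else 0).re
        + 4 * (∑ i, if 0 < p i θ then
            ((p i θ : ℝ) : ℂ) * inn (wd i k θ) (w i θ) * inn (w i θ) (wd i l θ)
            else 0).re)
    (hH : ∀ θ (k l : Fin n), H θ k l =
        (∑ i, if 0 < p i θ then pd i k θ * pd i l θ / p i θ else 0)
        + 4 * (∑ i, ∑ j, if i < j ∧ 0 < p i θ + p j θ then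
            (((p i θ - p j θ) ^ 2 / (p i θ + p j θ) : ℝ) : ℂ) *
              inn (wd i k θ) (w j θ) * inn (w j θ) (wd i l θ) else 0).re) :
    ∀ θ : Fin n → ℝ,
      (C θ - H θ).PosSemidef ∧
      (H θ = C θ ↔ ∀ (l : Fin n) (j k : Fin d),
        0 < p j θ → 0 < p k θ → inn (wd j l θ) (w k θ) = 0) := by
  
  intro θ
  -- derivative of orthonormality
  have key : ∀ (k : Fin n) (i j : Fin d),
      inn (wd i k θ) (w j θ) + inn (w i θ) (wd j k θ) = 0 := by
    intro k i j
    have hwi := hasDerivAt_pi.1 (hwd i k θ)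
    have hwj := hasDerivAt_pi.1 (hwd j k θ)
    have hterm : ∀ m : Fin d, HasDerivAt
        (fun t => (starRingEnd ℂ) (w i (Function.update θ k t) m) * (w j (Function.update θ k t) m))
        ((starRingEnd ℂ) (wd i k θ m) * w j θ m + (starRingEnd ℂ) (w i θ m) * wd j k θ m) (θ k) := by
      intro m
      have := ((hwi m).star.fun_mul (hwj m))
      simpa [Function.update_eq_self, Complex.star_def] using this
    have h1 : HasDerivAt
        (fun t => inn (w i (Function.update θ k t)) (w j (Function.update θ k t)))
        (inn (wd i k θ) (w j θ) + inn (w i θ) (wd j k θ)) (θ k) := by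
      have := HasDerivAt.fun_sum (u := Finset.univ) (fun m _ => hterm m)
      simpa [inn, Finset.sum_add_distrib] using this
    have h2 : HasDerivAt
        (fun t => inn (w i (Function.update θ k t)) (w j (Function.update θ k t)))
        0 (θ k) := by
      have heq : (fun t => inn (w i (Function.update θ k t)) (w j (Function.update θ k t)))
          = fun _ => (if i = j then (1:ℂ) else 0) := funext fun t => horth _ i j
      rw [heq]; exact hasDerivAt_const _ _
    exact h1.unique h2
  have hconj : ∀ (i j : Fin d) (l : Fin n),
      inn (w j θ) (wd i l θ) = (starRingEnd ℂ) (inn (wd i l θ) (w j θ)) :=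
    fun i j l => inn_comm _ _
  -- entrywise complex formula for C - H
  have hdiff : ∀ k l : Fin n, (C θ - H θ) k l =
      4 * (∑ i, ∑ j, if i < j ∧ 0 < p i θ + p j θ then
          ((((p i θ + p j θ) - (p i θ - p j θ)^2 / (p i θ + p j θ) : ℝ)) : ℂ) *
            inn (wd i k θ) (w j θ) * (starRingEnd ℂ) (inn (wd i l θ) (w j θ)) else 0).re
      + 4 * (∑ i, if 0 < p i θ then
          ((p i θ : ℝ) : ℂ) * inn (wd i k θ) (w i θ) * (starRingEnd ℂ) (inn (wd i l θ) (w i θ)) else 0).re := by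
    intro k l
    rw [Matrix.sub_apply, hC θ k l, hH θ k l]
    simp only [hconj]
    have hXZ : (∑ i, ∑ j, if i < j ∧ 0 < p i θ + p j θ then
            ((p i θ + p j θ : ℝ) : ℂ) * inn (wd i k θ) (w j θ) * (starRingEnd ℂ) (inn (wd i l θ) (w j θ)) else 0)
        - (∑ i, ∑ j, if i < j ∧ 0 < p i θ + p j θ then
            (((p i θ - p j θ) ^ 2 / (p i θ + p j θ) : ℝ) : ℂ) * inn (wd i k θ) (w j θ) * (starRingEnd ℂ) (inn (wd i l θ) (w j θ)) else 0)
        = ∑ i, ∑ j, if i < j ∧ 0 < p i θ + p j θ then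
            ((((p i θ + p j θ) - (p i θ - p j θ)^2 / (p i θ + p j θ) : ℝ)) : ℂ) *
              inn (wd i k θ) (w j θ) * (starRingEnd ℂ) (inn (wd i l θ) (w j θ)) else 0 := by
      rw [← Finset.sum_sub_distrib]
      refine Finset.sum_congr rfl fun i _ => ?_
      rw [← Finset.sum_sub_distrib]
      refine Finset.sum_congr rfl fun j _ => ?_
      split
      · push_cast; ring
      · ring
    have hre := congrArg Complex.re hXZ
    rw [Complex.sub_re] at hre
    linarith [hre]
  -- entrywise real formula for C - H
  have hdiff' : ∀ k l : Fin n, (C θ - H θ) k l =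
      4 * (∑ i, ∑ j, if i < j ∧ 0 < p i θ + p j θ then
          ((p i θ + p j θ) - (p i θ - p j θ)^2 / (p i θ + p j θ)) *
            ((inn (wd i k θ) (w j θ)).re * (inn (wd i l θ) (w j θ)).re
              + (inn (wd i k θ) (w j θ)).im * (inn (wd i l θ) (w j θ)).im) else 0)
      + 4 * (∑ i, if 0 < p i θ then
          p i θ * ((inn (wd i k θ) (w i θ)).re * (inn (wd i l θ) (w i θ)).re
              + (inn (wd i k θ) (w i θ)).im * (inn (wd i l θ) (w i θ)).im) else 0) := by
    intro k l
    rw [hdiff k l]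
    have hre : ∀ (r : ℝ) (u v : ℂ),
        ((r:ℂ) * u * (starRingEnd ℂ) v).re = r * (u.re * v.re + u.im * v.im) := by
      intro r u v
      simp [Complex.mul_re, Complex.mul_im, Complex.conj_re, Complex.conj_im]
      ring
    simp only [Complex.re_sum, apply_ite Complex.re, Complex.zero_re, hre]
  -- nonnegativity / positivity of the pair coefficient
  have hgnn : ∀ i j : Fin d, 0 < p i θ + p j θ →
      0 ≤ (p i θ + p j θ) - (p i θ - p j θ)^2 / (p i θ + p j θ) := by
    intro i j h
    have he : (p i θ + p j θ) - (p i θ - p j θ)^2 / (p i θ + p j θ)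
        = 4 * p i θ * p j θ / (p i θ + p j θ) := by field_simp; ring
    rw [he]
    have := hpnn i θ; have := hpnn j θ
    positivity
  have hgpos : ∀ i j : Fin d, 0 < p i θ → 0 < p j θ →
      0 < (p i θ + p j θ) - (p i θ - p j θ)^2 / (p i θ + p j θ) := by
    intro i j hi hj
    have h : 0 < p i θ + p j θ := by linarith
    have he : (p i θ + p j θ) - (p i θ - p j θ)^2 / (p i θ + p j θ)
        = 4 * p i θ * p j θ / (p i θ + p j θ) := by field_simp; ring
    rw [he]; positivity
  -- quadratic form
  have hquad : ∀ x : Fin n → ℝ, dotProduct x ((C θ - H θ).mulVec x) =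
      4 * (∑ i, ∑ j, if i < j ∧ 0 < p i θ + p j θ then
          ((p i θ + p j θ) - (p i θ - p j θ)^2 / (p i θ + p j θ)) *
            Complex.normSq (∑ k, (x k : ℂ) * inn (wd i k θ) (w j θ)) else 0)
      + 4 * (∑ i, if 0 < p i θ then
          p i θ * Complex.normSq (∑ k, (x k : ℂ) * inn (wd i k θ) (w i θ)) else 0) := by
    intro x
    have expand : dotProduct x ((C θ - H θ).mulVec x)
        = ∑ k, ∑ l, x k * x l * ((C θ - H θ) k l) := by
      simp only [dotProduct, Matrix.mulVec, Finset.mul_sum]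
      exact Finset.sum_congr rfl fun k _ => Finset.sum_congr rfl fun l _ => by ring
    rw [expand]
    simp only [hdiff]
    have split : ∀ (A B : Fin n → Fin n → ℝ),
        (∑ k, ∑ l, x k * x l * (4 * A k l + 4 * B k l))
        = 4 * (∑ k, ∑ l, x k * x l * A k l) + 4 * (∑ k, ∑ l, x k * x l * B k l) := by
      intro A B
      rw [Finset.mul_sum, Finset.mul_sum, ← Finset.sum_add_distrib]
      refine Finset.sum_congr rfl fun k _ => ?_
      rw [Finset.mul_sum, Finset.mul_sum, ← Finset.sum_add_distrib]
      refine Finset.sum_congr rfl fun l _ => ?_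
      ring
    rw [split]
    congr 1
    · -- double sum part via product type
      congr 1
      have lhs_eq : (∑ k, ∑ l, x k * x l *
          (∑ i, ∑ j, if i < j ∧ 0 < p i θ + p j θ then
            ((((p i θ + p j θ) - (p i θ - p j θ)^2 / (p i θ + p j θ) : ℝ)) : ℂ) *
              inn (wd i k θ) (w j θ) * (starRingEnd ℂ) (inn (wd i l θ) (w j θ)) else 0).re)
          = ∑ k, ∑ l, x k * x l *
          (∑ q : Fin d × Fin d, if q.1 < q.2 ∧ 0 < p q.1 θ + p q.2 θ then
            ((((p q.1 θ + p q.2 θ) - (p q.1 θ - p q.2 θ)^2 / (p q.1 θ + p q.2 θ) : ℝ)) : ℂ) *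
              inn (wd q.1 k θ) (w q.2 θ) * (starRingEnd ℂ) (inn (wd q.1 l θ) (w q.2 θ)) else 0).re := by
        refine Finset.sum_congr rfl fun k _ => Finset.sum_congr rfl fun l _ => ?_
        rw [Fintype.sum_prod_type]
      rw [lhs_eq,
        quad_aux x (fun q : Fin d × Fin d => (p q.1 θ + p q.2 θ) - (p q.1 θ - p q.2 θ)^2 / (p q.1 θ + p q.2 θ))
          (fun q : Fin d × Fin d => q.1 < q.2 ∧ 0 < p q.1 θ + p q.2 θ)
          (fun q k => inn (wd q.1 k θ) (w q.2 θ)),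
        Fintype.sum_prod_type]
    · congr 1
      exact quad_aux x (fun i => p i θ) (fun i => 0 < p i θ) (fun i k => inn (wd i k θ) (w i θ))
    -- symmetry
  have hsym : ∀ k l : Fin n, (C θ - H θ) k l = (C θ - H θ) l k := by
    intro k l
    rw [hdiff' k l, hdiff' l k]
    congr 1
    · congr 1
      refine Finset.sum_congr rfl fun i _ => Finset.sum_congr rfl fun j _ => ?_
      split <;> ring
    · congr 1
      refine Finset.sum_congr rfl fun i _ => ?_
      split <;> ring
  constructor
  · -- PosSemidef
    rw [Matrix.posSemidef_iff_dotProduct_mulVec]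
    constructor
    · ext k l
      simp only [Matrix.conjTranspose_apply, star_trivial]
      exact hsym l k
    · intro x
      have hx : star x = x := funext fun k => star_trivial _
      rw [hx, hquad x]
      have s1 : 0 ≤ ∑ i, ∑ j, if i < j ∧ 0 < p i θ + p j θ then
          ((p i θ + p j θ) - (p i θ - p j θ)^2 / (p i θ + p j θ)) *
            Complex.normSq (∑ k, (x k : ℂ) * inn (wd i k θ) (w j θ)) else 0 :=
        Finset.sum_nonneg fun i _ => Finset.sum_nonneg fun j _ => by
          split_ifs with h
          · exact mul_nonneg (hgnn i j h.2) (Complex.normSq_nonneg _)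
          · exact le_refl 0
      have s2 : 0 ≤ ∑ i, if 0 < p i θ then
          p i θ * Complex.normSq (∑ k, (x k : ℂ) * inn (wd i k θ) (w i θ)) else 0 :=
        Finset.sum_nonneg fun i _ => by
          split_ifs with h
          · exact mul_nonneg h.le (Complex.normSq_nonneg _)
          · exact le_refl 0
      linarith
  · constructor
    · -- H = C → orthogonality of derivatives
      intro hHC l j k hpj hpk
      have hzero : (C θ - H θ) l l = 0 := by rw [hHC]; simp
      rw [hdiff' l l] at hzero
      set A := ∑ i, ∑ j, if i < j ∧ 0 < p i θ + p j θ then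
          ((p i θ + p j θ) - (p i θ - p j θ)^2 / (p i θ + p j θ)) *
            ((inn (wd i l θ) (w j θ)).re * (inn (wd i l θ) (w j θ)).re
              + (inn (wd i l θ) (w j θ)).im * (inn (wd i l θ) (w j θ)).im) else 0 with hAdef
      set B := ∑ i, if 0 < p i θ then
          p i θ * ((inn (wd i l θ) (w i θ)).re * (inn (wd i l θ) (w i θ)).re
              + (inn (wd i l θ) (w i θ)).im * (inn (wd i l θ) (w i θ)).im) else 0 with hBdef
      have hnnA : ∀ i ∈ Finset.univ, (0:ℝ) ≤ ∑ j, if i < j ∧ 0 < p i θ + p j θ then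
          ((p i θ + p j θ) - (p i θ - p j θ)^2 / (p i θ + p j θ)) *
            ((inn (wd i l θ) (w j θ)).re * (inn (wd i l θ) (w j θ)).re
              + (inn (wd i l θ) (w j θ)).im * (inn (wd i l θ) (w j θ)).im) else 0 :=
        fun i _ => Finset.sum_nonneg fun j _ => by
          split_ifs with h
          · exact mul_nonneg (hgnn i j h.2)
              (add_nonneg (mul_self_nonneg _) (mul_self_nonneg _))
          · exact le_refl 0
      have hnnAij : ∀ (i : Fin d), ∀ j ∈ Finset.univ, (0:ℝ) ≤ (if i < j ∧ 0 < p i θ + p j θ then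
          ((p i θ + p j θ) - (p i θ - p j θ)^2 / (p i θ + p j θ)) *
            ((inn (wd i l θ) (w j θ)).re * (inn (wd i l θ) (w j θ)).re
              + (inn (wd i l θ) (w j θ)).im * (inn (wd i l θ) (w j θ)).im) else 0) :=
        fun i j _ => by
          split_ifs with h
          · exact mul_nonneg (hgnn i j h.2)
              (add_nonneg (mul_self_nonneg _) (mul_self_nonneg _))
          · exact le_refl 0
      have hnnB : ∀ i ∈ Finset.univ, (0:ℝ) ≤ (if 0 < p i θ then
          p i θ * ((inn (wd i l θ) (w i θ)).re * (inn (wd i l θ) (w i θ)).re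
              + (inn (wd i l θ) (w i θ)).im * (inn (wd i l θ) (w i θ)).im) else 0) :=
        fun i _ => by
          split_ifs with h
          · exact mul_nonneg h.le (add_nonneg (mul_self_nonneg _) (mul_self_nonneg _))
          · exact le_refl 0
      have hA0 : A = 0 := by
        have h1 : 0 ≤ A := Finset.sum_nonneg hnnA
        have h2 : 0 ≤ B := Finset.sum_nonneg hnnB
        linarith
      have hB0 : B = 0 := by
        have h1 : 0 ≤ A := Finset.sum_nonneg hnnA
        have h2 : 0 ≤ B := Finset.sum_nonneg hnnB
        linarith
      have hterm0 : ∀ i j : Fin d, i < j → 0 < p i θ → 0 < p j θ →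
          inn (wd i l θ) (w j θ) = 0 := by
        intro i j hij hpi hpj'
        have h1 := (Finset.sum_eq_zero_iff_of_nonneg hnnA).1 hA0 i (Finset.mem_univ i)
        have h2 := (Finset.sum_eq_zero_iff_of_nonneg (hnnAij i)).1 h1 j (Finset.mem_univ j)
        rw [if_pos ⟨hij, by linarith⟩] at h2
        have hg := hgpos i j hpi hpj'
        have h3 : (inn (wd i l θ) (w j θ)).re * (inn (wd i l θ) (w j θ)).re
            + (inn (wd i l θ) (w j θ)).im * (inn (wd i l θ) (w j θ)).im = 0 := by
          rcases mul_eq_zero.1 h2 with h | h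
          · exact absurd h (ne_of_gt hg)
          · exact h
        have h4 : Complex.normSq (inn (wd i l θ) (w j θ)) = 0 := by
          rw [Complex.normSq_apply]; exact h3
        exact Complex.normSq_eq_zero.1 h4
      have hdiag0 : ∀ i : Fin d, 0 < p i θ → inn (wd i l θ) (w i θ) = 0 := by
        intro i hpi
        have h1 := (Finset.sum_eq_zero_iff_of_nonneg hnnB).1 hB0 i (Finset.mem_univ i)
        rw [if_pos hpi] at h1
        have h3 : (inn (wd i l θ) (w i θ)).re * (inn (wd i l θ) (w i θ)).re
            + (inn (wd i l θ) (w i θ)).im * (inn (wd i l θ) (w i θ)).im = 0 := by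
          rcases mul_eq_zero.1 h1 with h | h
          · exact absurd h (ne_of_gt hpi)
          · exact h
        have h4 : Complex.normSq (inn (wd i l θ) (w i θ)) = 0 := by
          rw [Complex.normSq_apply]; exact h3
        exact Complex.normSq_eq_zero.1 h4
      rcases lt_trichotomy j k with h | h | h
      · exact hterm0 j k h hpj hpk
      · subst h; exact hdiag0 j hpj
      · have h1 := hterm0 k j h hpk hpj
        have h2 := key l k j
        rw [h1, zero_add] at h2
        rw [inn_comm, h2, map_zero]
    · -- orthogonality → H = C
      intro hv
      ext k l
      have h0 : (C θ - H θ) k l = 0 := by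
        rw [hdiff' k l]
        have hA : (∑ i, ∑ j, if i < j ∧ 0 < p i θ + p j θ then
            ((p i θ + p j θ) - (p i θ - p j θ)^2 / (p i θ + p j θ)) *
              ((inn (wd i k θ) (w j θ)).re * (inn (wd i l θ) (w j θ)).re
                + (inn (wd i k θ) (w j θ)).im * (inn (wd i l θ) (w j θ)).im) else 0) = 0 :=
          Finset.sum_eq_zero fun i _ => Finset.sum_eq_zero fun j _ => by
            split_ifs with hc
            · rcases hdich i with hi | hi
              · rcases hdich j with hj | hj
                · rw [hv k i j (hi θ) (hj θ), hv l i j (hi θ) (hj θ)]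
                  simp
                · have hpj0 := hj θ
                  have hpi : 0 < p i θ := by
                    have := hc.2; rw [hpj0] at this; simpa using this
                  have hne : p i θ ≠ 0 := ne_of_gt hpi
                  have hg0 : (p i θ + p j θ) - (p i θ - p j θ)^2 / (p i θ + p j θ) = 0 := by
                    rw [hpj0, add_zero, sub_zero, sq, mul_self_div_self, sub_self]
                  rw [hg0, zero_mul]
              · have hpi0 := hi θ
                have hpj : 0 < p j θ := by
                  have := hc.2; rw [hpi0] at this; simpa using this
                have hg0 : (p i θ + p j θ) - (p i θ - p j θ)^2 / (p i θ + p j θ) = 0 := by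
                  rw [hpi0, zero_add, zero_sub, neg_sq, sq, mul_self_div_self, sub_self]
                rw [hg0, zero_mul]
            · rfl
        have hB : (∑ i, if 0 < p i θ then
            p i θ * ((inn (wd i k θ) (w i θ)).re * (inn (wd i l θ) (w i θ)).re
                + (inn (wd i k θ) (w i θ)).im * (inn (wd i l θ) (w i θ)).im) else 0) = 0 :=
          Finset.sum_eq_zero fun i _ => by
            split_ifs with hc
            · rw [hv k i i hc hc, hv l i i hc hc]
              simp
            · rfl
        rw [hA, hB]; ring
      rw [Matrix.sub_apply, sub_eq_zero] at h0
      exact h0.symm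
end
end

section
/- Trace of the SLD quantum information for commuting dependent unitary channels (Proposition): In the commuting-channels setup, for each m ∈ {1,…,d−1} the quantity (H_θ)_{mm} := 4(⟨∂_m ψ_θ, ∂_m ψ_θ⟩ − |⟨∂_m ψ_θ, ψ_θ⟩|²) equals (4/d)·g_m'(θ_m)². Consequently Σ_{m=1}^{d−1} (H_θ)_{mm} = (4/d) Σ_{m=1}^{d−1} ( Σ_{j=1}^n f_j'(θ_m) )². -/
open scoped BigOperators

noncomputable section

def mulVecLM {N : ℕ} (v : Fin N → ℂ) : Matrix (Fin N) (Fin N) ℂ →ₗ[ℂ] (Fin N → ℂ) where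
  toFun M := M.mulVec v
  map_add' M N' := Matrix.add_mulVec M N' v
  map_smul' r M := Matrix.smul_mulVec r M v

lemma exp_mulVec_eigen {N : ℕ} (A : Matrix (Fin N) (Fin N) ℂ) (v : Fin N → ℂ) (μ : ℂ)
    (h : A.mulVec v = μ • v) :
    (NormedSpace.exp A).mulVec v = Complex.exp μ • v := by
  letI : SeminormedRing (Matrix (Fin N) (Fin N) ℂ) := Matrix.linftyOpSemiNormedRing
  letI : NormedRing (Matrix (Fin N) (Fin N) ℂ) := Matrix.linftyOpNormedRing
  letI : NormedAlgebra ℂ (Matrix (Fin N) (Fin N) ℂ) := Matrix.linftyOpNormedAlgebra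
  have hpow : ∀ k : ℕ, (A ^ k).mulVec v = μ ^ k • v := by
    intro k
    induction k with
    | zero => simp [Matrix.one_mulVec]
    | succ k ih =>
        rw [pow_succ, ← Matrix.mulVec_mulVec, h, Matrix.mulVec_smul, ih, smul_smul, pow_succ, mul_comm]
  have hL : Continuous (mulVecLM v) := (mulVecLM v).continuous_of_finiteDimensional
  have hsum : Summable fun k : ℕ => ((k.factorial : ℂ))⁻¹ • A ^ k :=
    NormedSpace.expSeries_summable' (𝕂 := ℂ) A
  have hmap : (NormedSpace.exp A).mulVec v
      = ∑' k : ℕ, mulVecLM v (((k.factorial : ℂ))⁻¹ • A ^ k) := by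
    have := ContinuousLinearMap.map_tsum (⟨mulVecLM v, hL⟩ :
        Matrix (Fin N) (Fin N) ℂ →L[ℂ] (Fin N → ℂ)) hsum
    calc (NormedSpace.exp A).mulVec v
        = mulVecLM v (∑' k : ℕ, ((k.factorial : ℂ))⁻¹ • A ^ k) := by
          rw [NormedSpace.exp_eq_tsum ℂ]; rfl
      _ = ∑' k : ℕ, mulVecLM v (((k.factorial : ℂ))⁻¹ • A ^ k) := this
  rw [hmap]
  have hterm : ∀ k : ℕ, mulVecLM v (((k.factorial : ℂ))⁻¹ • A ^ k)
      = (((k.factorial : ℂ))⁻¹ * μ ^ k) • v := by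
    intro k
    rw [map_smul]
    show ((k.factorial : ℂ))⁻¹ • (A ^ k).mulVec v = _
    rw [hpow k, smul_smul]
  simp only [hterm]
  have hsumμ : Summable fun k : ℕ => ((k.factorial : ℂ))⁻¹ * μ ^ k := by
    simpa [smul_eq_mul] using NormedSpace.expSeries_summable' (𝕂 := ℂ) μ
  rw [hsumμ.tsum_smul_const]
  congr 1
  rw [Complex.exp_eq_exp_ℂ, NormedSpace.exp_eq_tsum ℂ]
  simp [smul_eq_mul]

lemma inn_comb {d : ℕ} {w : Fin d → Fin d → ℂ}
    (horth : ∀ i j : Fin d, inn (w i) (w j) = if i = j then 1 else 0)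
    (a b : Fin d → ℂ) :
    inn (∑ i, a i • w i) (∑ i, b i • w i) = ∑ i, (starRingEnd ℂ) (a i) * b i := by
  have key : ∀ x : Fin d, (starRingEnd ℂ) ((∑ i, a i • w i) x) * ((∑ i, b i • w i) x)
      = ∑ i, ∑ j, ((starRingEnd ℂ) (a i) * b j) * ((starRingEnd ℂ) (w i x) * w j x) := by
    intro x
    simp only [Finset.sum_apply, Pi.smul_apply, smul_eq_mul, map_sum, map_mul,
      Finset.sum_mul_sum]
    exact Finset.sum_congr rfl fun i _ => Finset.sum_congr rfl fun j _ => by ring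
  unfold inn
  simp only [key]
  rw [Finset.sum_comm]
  refine Finset.sum_congr rfl fun i _ => ?_
  rw [Finset.sum_comm]
  have h2 : ∀ j : Fin d, (∑ x, ((starRingEnd ℂ) (a i) * b j) *
      ((starRingEnd ℂ) (w i x) * w j x)) = ((starRingEnd ℂ) (a i) * b j) * inn (w i) (w j) := by
    intro j
    rw [inn, Finset.mul_sum]
  simp only [h2, horth, mul_ite, mul_one, mul_zero]
  simp

lemma inn_smul_smul {d : ℕ} (r s : ℂ) (x y : Fin d → ℂ) :
    inn (r • x) (s • y) = (starRingEnd ℂ) r * s * inn x y := by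
  unfold inn
  rw [Finset.mul_sum]
  refine Finset.sum_congr rfl fun i _ => ?_
  simp only [Pi.smul_apply, smul_eq_mul, map_mul]
  ring

/-- **Trace of the SLD quantum information for commuting dependent unitary channels.**
Each diagonal entry `(H_θ)_{mm} = 4(⟨∂_m ψ_θ, ∂_m ψ_θ⟩ − |⟨∂_m ψ_θ, ψ_θ⟩|²)` equals
`(4/d)·g'(θ_m)²` with `g' = Σ_j f_j'`, and hence the trace equals
`(4/d) Σ_m (Σ_j f_j'(θ_m))²`. -/
theorem commuting_channels_sld_trace {d n : ℕ} (hd : 2 ≤ d)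
    (w : Fin d → Fin d → ℂ)
    (horth : ∀ i j : Fin d, inn (w i) (w j) = if i = j then 1 else 0)
    (c : Fin (d - 1) → Fin d → ℝ)
    (hc0 : ∀ m, ∑ i, c m i = 0)
    (hcorth : ∀ m m', ∑ i, c m i * c m' i = if m = m' then 1 else 0)
    (f f' : Fin n → ℝ → ℝ)
    (hf : ∀ (j : Fin n) (s : ℝ), HasDerivAt (f j) (f' j s) s)
    (ψ : (Fin (d - 1) → ℝ) → (Fin d → ℂ))
    (hψ : ∀ θ, ψ θ = (NormedSpace.exp
        (Complex.I • ∑ k, ((∑ j, f j (θ k) : ℝ) : ℂ) •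
          (∑ i, (c k i : ℂ) • Matrix.vecMulVec (w i) (star (w i))))).mulVec
        (((1 / Real.sqrt d : ℝ) : ℂ) • ∑ k, w k))
    (Dψ : Fin (d - 1) → (Fin (d - 1) → ℝ) → (Fin d → ℂ))
    (hDψ : ∀ m θ, HasDerivAt (fun t => ψ (Function.update θ m t)) (Dψ m θ) (θ m)) :
    (∀ (θ : Fin (d - 1) → ℝ) (m : Fin (d - 1)),
      (4 : ℂ) * (inn (Dψ m θ) (Dψ m θ) - ‖inn (Dψ m θ) (ψ θ)‖ ^ 2)
        = (((4 / d) * (∑ j, f' j (θ m)) ^ 2 : ℝ) : ℂ)) ∧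
    (∀ θ : Fin (d - 1) → ℝ,
      ∑ m, (4 : ℂ) * (inn (Dψ m θ) (Dψ m θ) - ‖inn (Dψ m θ) (ψ θ)‖ ^ 2)
        = (((4 / d) * ∑ m, (∑ j, f' j (θ m)) ^ 2 : ℝ) : ℂ)) := by
  classical
  have hd0 : (0 : ℝ) < d := by
    have : (2 : ℝ) ≤ d := by exact_mod_cast hd
    linarith
  set g : ℝ → ℝ := fun s => ∑ j, f j s with hg
  set g' : ℝ → ℝ := fun s => ∑ j, f' j s with hg'
  have hgderiv : ∀ s, HasDerivAt g (g' s) s := fun s => HasDerivAt.fun_sum fun j _ => hf j s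
  set μ : (Fin (d - 1) → ℝ) → Fin d → ℂ :=
    fun θ i => Complex.I * ((∑ k, g (θ k) * c k i : ℝ) : ℂ) with hμ
  set r : ℂ := ((1 / Real.sqrt d : ℝ) : ℂ) with hrdef
  -- eigenvector computations
  have hP : ∀ i' i : Fin d, mulVecLM (w i) (Matrix.vecMulVec (w i') (star (w i')))
      = (if i' = i then (1 : ℂ) else 0) • w i' := by
    intro i' i
    have : mulVecLM (w i) (Matrix.vecMulVec (w i') (star (w i'))) = inn (w i') (w i) • w i' := by
      ext a
      show ∑ b, (w i' a * star (w i' b)) * w i b = inn (w i') (w i) * w i' a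
      rw [inn, Finset.sum_mul]
      refine Finset.sum_congr rfl fun b _ => ?_
      simp only [Pi.star_apply, starRingEnd_apply]
      ring
    rw [this, horth]
  have hA : ∀ (θ : Fin (d - 1) → ℝ) (i : Fin d),
      (Complex.I • ∑ k, ((∑ j, f j (θ k) : ℝ) : ℂ) •
        (∑ i', (c k i' : ℂ) • Matrix.vecMulVec (w i') (star (w i')))).mulVec (w i)
      = μ θ i • w i := by
    intro θ i
    have : (Complex.I • ∑ k, ((∑ j, f j (θ k) : ℝ) : ℂ) •
        (∑ i', (c k i' : ℂ) • Matrix.vecMulVec (w i') (star (w i')))).mulVec (w i)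
        = mulVecLM (w i) (Complex.I • ∑ k, ((∑ j, f j (θ k) : ℝ) : ℂ) •
        (∑ i', (c k i' : ℂ) • Matrix.vecMulVec (w i') (star (w i')))) := rfl
    rw [this]
    simp only [map_smul, map_sum, hP]
    have hcol : ∀ k, (∑ i', (c k i' : ℂ) • ((if i' = i then (1 : ℂ) else 0) • w i'))
        = (c k i : ℂ) • w i := by
      intro k
      rw [Finset.sum_eq_single i]
      · simp
      · intro b _ hb; simp [hb]
      · intro h; exact absurd (Finset.mem_univ i) h
    have hsc : ((∑ k, g (θ k) * c k i : ℝ) : ℂ)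
        = ∑ k, ((∑ j, f j (θ k) : ℝ) : ℂ) * ((c k i : ℝ) : ℂ) := by
      simp only [hg]
      push_cast
      rfl
    simp only [hcol]
    simp only [hμ]
    rw [hsc, Finset.mul_sum, Finset.sum_smul, Finset.smul_sum]
    refine Finset.sum_congr rfl fun k _ => ?_
    rw [smul_smul, smul_smul, mul_assoc]
  have hψ' : ∀ θ, ψ θ = r • ∑ i, Complex.exp (μ θ i) • w i := by
    intro θ
    rw [hψ θ, Matrix.mulVec_smul]
    congr 1
    rw [← Matrix.mulVecLin_apply, map_sum]
    refine Finset.sum_congr rfl fun k _ => ?_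
    rw [Matrix.mulVecLin_apply]
    exact exp_mulVec_eigen _ _ _ (hA θ k)
  -- derivative
  have hDval : ∀ (m : Fin (d - 1)) (θ : Fin (d - 1) → ℝ),
      Dψ m θ = r • ∑ i, (Complex.exp (μ θ i) *
        (Complex.I * ((g' (θ m) * c m i : ℝ) : ℂ))) • w i := by
    intro m θ
    refine (hDψ m θ).unique ?_
    have heq : (fun t => ψ (Function.update θ m t))
        = fun t => r • ∑ i, Complex.exp (Complex.I *
            ((∑ k, g (Function.update θ m t k) * c k i : ℝ) : ℂ)) • w i := by
      funext t
      rw [hψ' (Function.update θ m t)]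
    rw [heq]
    have hterm : ∀ i : Fin d, HasDerivAt (fun t => Complex.exp (Complex.I *
        ((∑ k, g (Function.update θ m t k) * c k i : ℝ) : ℂ)))
        (Complex.exp (μ θ i) * (Complex.I * ((g' (θ m) * c m i : ℝ) : ℂ))) (θ m) := by
      intro i
      have hS : HasDerivAt (fun t => ∑ k, g (Function.update θ m t k) * c k i)
          (g' (θ m) * c m i) (θ m) := by
        have hall : ∀ k ∈ Finset.univ, HasDerivAt
            (fun t => g (Function.update θ m t k) * c k i)
            (if k = m then g' (θ m) * c m i else 0) (θ m) := by
          intro k _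
          by_cases hk : k = m
          · subst hk
            simp only [if_pos rfl]
            have : (fun t => g (Function.update θ k t k) * c k i)
                = fun t => g t * c k i := by
              funext t; rw [Function.update_self]
            rw [this]
            exact (hgderiv (θ k)).mul_const _
          · simp only [if_neg hk]
            have : (fun t => g (Function.update θ m t k) * c k i)
                = fun _ => g (θ k) * c k i := by
              funext t; rw [Function.update_of_ne hk]
            rw [this]
            exact hasDerivAt_const _ _
        have h := HasDerivAt.fun_sum hall
        simpa using h
      have h1 : HasDerivAt (fun t : ℝ =>
          ((∑ k, g (Function.update θ m t k) * c k i : ℝ) : ℂ))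
          ((g' (θ m) * c m i : ℝ) : ℂ) (θ m) := hS.ofReal_comp
      have h2 := (h1.const_mul Complex.I).cexp
      have h3 : Complex.I * ((∑ k, g (Function.update θ m (θ m) k) * c k i : ℝ) : ℂ)
          = μ θ i := by
        simp only [hμ]
        rw [Function.update_eq_self]
      rw [h3] at h2
      exact h2
    have hsum := HasDerivAt.fun_sum (u := (Finset.univ : Finset (Fin d))) (A := fun i t => Complex.exp (Complex.I *
        ((∑ k, g (Function.update θ m t k) * c k i : ℝ) : ℂ)) • w i)
      (A' := fun i => (Complex.exp (μ θ i) * (Complex.I * ((g' (θ m) * c m i : ℝ) : ℂ))) • w i)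
      (fun i _ => (hterm i).smul_const (w i))
    exact hsum.const_smul r
  -- algebraic helpers
  have hr : (starRingEnd ℂ) r * r = ((1 / d : ℝ) : ℂ) := by
    rw [hrdef, Complex.conj_ofReal, ← Complex.ofReal_mul]
    congr 1
    rw [div_mul_div_comm, one_mul, Real.mul_self_sqrt hd0.le]
  have hexp1 : ∀ (θ : Fin (d - 1) → ℝ) (i : Fin d),
      (starRingEnd ℂ) (Complex.exp (μ θ i)) * Complex.exp (μ θ i) = 1 := by
    intro θ i
    rw [← Complex.exp_conj, ← Complex.exp_add]
    have : (starRingEnd ℂ) (μ θ i) + μ θ i = 0 := by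
      rw [hμ]
      simp only [map_mul, Complex.conj_I, Complex.conj_ofReal]
      ring
    rw [this, Complex.exp_zero]
  -- the main per-entry computation
  have main : ∀ (θ : Fin (d - 1) → ℝ) (m : Fin (d - 1)),
      (4 : ℂ) * (inn (Dψ m θ) (Dψ m θ) - ‖inn (Dψ m θ) (ψ θ)‖ ^ 2)
        = (((4 / d) * (∑ j, f' j (θ m)) ^ 2 : ℝ) : ℂ) := by
    intro θ m
    set b : Fin d → ℂ := fun i => Complex.exp (μ θ i) *
      (Complex.I * ((g' (θ m) * c m i : ℝ) : ℂ)) with hb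
    have hDD : inn (Dψ m θ) (Dψ m θ)
        = ((1 / d : ℝ) : ℂ) * (((g' (θ m)) ^ 2 : ℝ) : ℂ) := by
      rw [hDval m θ, inn_smul_smul, inn_comb horth, hr]
      congr 1
      have hbb : ∀ i, (starRingEnd ℂ) (b i) * b i
          = (((g' (θ m) * c m i) ^ 2 : ℝ) : ℂ) := by
        intro i
        have key : (starRingEnd ℂ) (b i) * b i
            = ((starRingEnd ℂ) (Complex.exp (μ θ i)) * Complex.exp (μ θ i)) *
              (((starRingEnd ℂ) Complex.I * Complex.I) *
              ((starRingEnd ℂ) ((g' (θ m) * c m i : ℝ) : ℂ) * ((g' (θ m) * c m i : ℝ) : ℂ))) := by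
          rw [hb]
          simp only [map_mul]
          ring
        rw [key, hexp1, Complex.conj_I, Complex.conj_ofReal]
        push_cast
        ring_nf
        rw [Complex.I_sq]
        ring
      rw [Finset.sum_congr rfl fun i _ => hbb i, ← Complex.ofReal_sum]
      congr 1
      have : ∑ i, (g' (θ m) * c m i) ^ 2 = (g' (θ m)) ^ 2 * ∑ i, c m i * c m i := by
        rw [Finset.mul_sum]
        exact Finset.sum_congr rfl fun i _ => by ring
      rw [this, hcorth m m]
      simp
    have hDψ0 : inn (Dψ m θ) (ψ θ) = 0 := by
      rw [hDval m θ, hψ' θ, inn_smul_smul, inn_comb horth]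
      have hbψ : ∀ i, (starRingEnd ℂ) (b i) * Complex.exp (μ θ i)
          = (-Complex.I) * ((g' (θ m) * c m i : ℝ) : ℂ) := by
        intro i
        have key : (starRingEnd ℂ) (b i) * Complex.exp (μ θ i)
            = ((starRingEnd ℂ) (Complex.exp (μ θ i)) * Complex.exp (μ θ i)) *
              ((starRingEnd ℂ) Complex.I * (starRingEnd ℂ) ((g' (θ m) * c m i : ℝ) : ℂ)) := by
          rw [hb]
          simp only [map_mul]
          ring
        rw [key, hexp1, Complex.conj_I, Complex.conj_ofReal]
        ring
      rw [Finset.sum_congr rfl fun i _ => hbψ i]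
      have : ∑ i, (-Complex.I) * ((g' (θ m) * c m i : ℝ) : ℂ)
          = (-Complex.I) * ((g' (θ m) : ℝ) : ℂ) * ((∑ i, c m i : ℝ) : ℂ) := by
        push_cast
        rw [Finset.mul_sum]
        exact Finset.sum_congr rfl fun i _ => by ring
      rw [this, hc0 m]
      simp
    rw [hDD, hDψ0]
    simp only [norm_zero]
    simp only [hg']
    push_cast
    ring
  refine ⟨main, fun θ => ?_⟩
  rw [Finset.sum_congr rfl fun m _ => main θ m, ← Complex.ofReal_sum]
  congr 1
  rw [Finset.mul_sum]
end
end

section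
/- Explicit multi-parameter SLDs and the SLD quantum information matrix (Proposition): In the multi-parameter spectral-family setup, define for each k ∈ {1,…,p} the matrix λ̃^k_θ = Σ_{i: p_i>0} (p_i^{(k)}/p_i) |w_i(θ)⟩⟨w_i(θ)| + 2 Σ_{i≠j, p_i+p_j>0} ((p_i−p_j)/(p_i+p_j)) ⟨w_i^{(k)}(θ), w_j(θ)⟩ |w_i(θ)⟩⟨w_j(θ)|. Then each λ̃^k_θ is Hermitian, satisfies ∂ρ_θ/∂θ^k = (1/2)(ρ_θ λ̃^k_θ + λ̃^k_θ ρ_θ), and for all k,l one has Re tr( λ̃^k_θ ρ_θ λ̃^l_θ ) = (H(θ))_{kl}. -/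
open scoped BigOperators

noncomputable section

namespace SLDAux

open Matrix

variable {d : ℕ}

lemma inn_conj (x y : Fin d → ℂ) : inn x y = (starRingEnd ℂ) (inn y x) := by
  simp [inn, map_sum, mul_comm]

/-- matrix with rows `star (w i)` -/
def U (w : Fin d → Fin d → ℂ) : Matrix (Fin d) (Fin d) ℂ := Matrix.of fun i a => star (w i a)

lemma U_mul_Uh (w : Fin d → Fin d → ℂ)
    (horth : ∀ i j, inn (w i) (w j) = if i = j then 1 else 0) :
    U w * (U w)ᴴ = 1 := by
  ext i j
  have h := horth i j
  simp only [inn, starRingEnd_apply] at h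
  simp only [U, Matrix.mul_apply, Matrix.conjTranspose_apply, Matrix.of_apply, star_star,
    Matrix.one_apply]
  exact h

lemma Uh_mul_U (w : Fin d → Fin d → ℂ)
    (horth : ∀ i j, inn (w i) (w j) = if i = j then 1 else 0) :
    (U w)ᴴ * U w = 1 := mul_eq_one_comm.mp (U_mul_Uh w horth)

lemma compl (w : Fin d → Fin d → ℂ)
    (horth : ∀ i j, inn (w i) (w j) = if i = j then 1 else 0) (a b : Fin d) :
    (∑ i, w i a * star (w i b)) = if a = b then 1 else 0 := by
  have h := Uh_mul_U w horth
  have h2 := congrFun (congrFun h a) b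
  simp only [Matrix.mul_apply, Matrix.conjTranspose_apply, U, Matrix.of_apply,
    Matrix.one_apply, star_star] at h2
  simpa using h2

def mk (w : Fin d → Fin d → ℂ) (C : Matrix (Fin d) (Fin d) ℂ) : Matrix (Fin d) (Fin d) ℂ :=
  (U w)ᴴ * C * U w

lemma mk_apply (w : Fin d → Fin d → ℂ) (C : Matrix (Fin d) (Fin d) ℂ) (a b : Fin d) :
    mk w C a b = ∑ i, ∑ j, C i j * (w i a * star (w j b)) := by
  simp only [mk, Matrix.mul_apply, Matrix.conjTranspose_apply, U, Matrix.of_apply,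
    star_star, Finset.sum_mul]
  rw [Finset.sum_comm]
  congr 1; ext i; congr 1; ext j; ring

lemma mk_mul (w : Fin d → Fin d → ℂ)
    (horth : ∀ i j, inn (w i) (w j) = if i = j then 1 else 0)
    (C D : Matrix (Fin d) (Fin d) ℂ) : mk w C * mk w D = mk w (C * D) := by
  have h := U_mul_Uh w horth
  unfold mk
  calc (U w)ᴴ * C * U w * ((U w)ᴴ * D * U w)
      = (U w)ᴴ * C * (U w * (U w)ᴴ) * D * U w := by
        simp only [Matrix.mul_assoc]
    _ = (U w)ᴴ * (C * D) * U w := by rw [h]; simp only [Matrix.mul_assoc, Matrix.one_mul]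

lemma mk_add (w : Fin d → Fin d → ℂ) (C D : Matrix (Fin d) (Fin d) ℂ) :
    mk w (C + D) = mk w C + mk w D := by
  simp [mk, Matrix.mul_add, Matrix.add_mul]

lemma mk_smul (w : Fin d → Fin d → ℂ) (c : ℂ) (C : Matrix (Fin d) (Fin d) ℂ) :
    mk w (c • C) = c • mk w C := by
  simp [mk, Matrix.mul_smul, Matrix.smul_mul]

lemma trace_mk (w : Fin d → Fin d → ℂ)
    (horth : ∀ i j, inn (w i) (w j) = if i = j then 1 else 0)
    (C : Matrix (Fin d) (Fin d) ℂ) : (mk w C).trace = C.trace := by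
  unfold mk
  rw [Matrix.trace_mul_cycle, U_mul_Uh w horth, Matrix.one_mul]


lemma mk_conjT (w : Fin d → Fin d → ℂ) (C : Matrix (Fin d) (Fin d) ℂ) :
    (mk w C)ᴴ = mk w Cᴴ := by
  simp [mk, Matrix.conjTranspose_mul, Matrix.mul_assoc]

lemma mk_eq_sum (w : Fin d → Fin d → ℂ) (C : Matrix (Fin d) (Fin d) ℂ) :
    mk w C = ∑ i, ∑ j, C i j • Matrix.vecMulVec (w i) (star (w j)) := by
  ext a b
  rw [mk_apply]
  simp [Matrix.sum_apply, Matrix.vecMulVec_apply]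

lemma sum_split (F : Fin d → Fin d → ℂ) (hF : ∀ i, F i i = 0) :
    ∑ i, ∑ j, F i j = ∑ i, ∑ j, (if i < j then F i j + F j i else 0) := by
  have key : ∀ i j : Fin d, F i j = (if i < j then F i j else 0) + (if j < i then F i j else 0) := by
    intro i j
    rcases lt_trichotomy i j with h | h | h
    · simp [h, asymm h]
    · subst h; simp [hF, lt_irrefl]
    · simp [h, asymm h]
  calc ∑ i, ∑ j, F i j
      = ∑ i, ∑ j, ((if i < j then F i j else 0) + (if j < i then F i j else 0)) := by
        exact Finset.sum_congr rfl fun i _ => Finset.sum_congr rfl fun j _ => key i j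
    _ = (∑ i, ∑ j, (if i < j then F i j else 0)) + ∑ i, ∑ j, (if j < i then F i j else 0) := by
        simp [Finset.sum_add_distrib]
    _ = (∑ i, ∑ j, (if i < j then F i j else 0)) + ∑ i, ∑ j, (if i < j then F j i else 0) := by
        rw [Finset.sum_comm (f := fun i j => if j < i then F i j else 0)]
    _ = ∑ i, ∑ j, (if i < j then F i j + F j i else 0) := by
        rw [← Finset.sum_add_distrib]
        refine Finset.sum_congr rfl fun i _ => ?_
        rw [← Finset.sum_add_distrib]
        refine Finset.sum_congr rfl fun j _ => ?_
        split_ifs <;> simp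

end SLDAux

/-- Coefficient matrix of `λ̃^k_θ` in the `w`-basis. -/
def Cmat {d n : ℕ} (p : Fin d → (Fin n → ℝ) → ℝ) (pd : Fin d → Fin n → (Fin n → ℝ) → ℝ)
    (w : Fin d → (Fin n → ℝ) → (Fin d → ℂ)) (wd : Fin d → Fin n → (Fin n → ℝ) → (Fin d → ℂ))
    (θ : Fin n → ℝ) (k : Fin n) :
    Matrix (Fin d) (Fin d) ℂ :=
  Matrix.of fun i j =>
    if i = j then (if 0 < p i θ then ((pd i k θ / p i θ : ℝ) : ℂ) else 0)
    else (if 0 < p i θ + p j θ then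
      2 * (((p i θ - p j θ) / (p i θ + p j θ) : ℝ) : ℂ) * inn (wd i k θ) (w j θ) else 0)

/-- Off-diagonal summand of the trace formula. -/
def Foff {d n : ℕ} (p : Fin d → (Fin n → ℝ) → ℝ) (pd : Fin d → Fin n → (Fin n → ℝ) → ℝ)
    (w : Fin d → (Fin n → ℝ) → (Fin d → ℂ)) (wd : Fin d → Fin n → (Fin n → ℝ) → (Fin d → ℂ))
    (θ : Fin n → ℝ) (k l : Fin n) (i j : Fin d) : ℂ :=
  if i = j then 0 else
    Cmat p pd w wd θ k i j * (p j θ : ℂ) * Cmat p pd w wd θ l j i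

/-- **Explicit multi-parameter SLDs and the SLD quantum information matrix.**
Each `λ̃^k_θ` is Hermitian, satisfies the SLD equation
`∂ρ_θ/∂θ^k = (1/2)(ρ_θ λ̃^k_θ + λ̃^k_θ ρ_θ)` (entrywise), and
`Re tr(λ̃^k_θ ρ_θ λ̃^l_θ) = (H(θ))_{kl}`. -/
theorem multiparam_explicit_sld {d n : ℕ} (hd : 1 ≤ d) (hn : 1 ≤ n)
    (p : Fin d → (Fin n → ℝ) → ℝ) (w : Fin d → (Fin n → ℝ) → (Fin d → ℂ))
    (pd : Fin d → Fin n → (Fin n → ℝ) → ℝ)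
    (wd : Fin d → Fin n → (Fin n → ℝ) → (Fin d → ℂ))
    (horth : ∀ θ (i j : Fin d), inn (w i θ) (w j θ) = if i = j then 1 else 0)
    (hpnn : ∀ (i : Fin d) θ, 0 ≤ p i θ) (hpsum : ∀ θ, ∑ i, p i θ = 1)
    (hpd : ∀ (i : Fin d) (k : Fin n) θ,
      HasDerivAt (fun t => p i (Function.update θ k t)) (pd i k θ) (θ k))
    (hwd : ∀ (i : Fin d) (k : Fin n) θ,
      HasDerivAt (fun t => w i (Function.update θ k t)) (wd i k θ) (θ k))
    (hpdC : ∀ i : Fin d, Continuous fun θ k => pd i k θ)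
    (hwdC : ∀ i : Fin d, Continuous fun θ k => wd i k θ)
    (hdich : ∀ i : Fin d, (∀ θ, 0 < p i θ) ∨ (∀ θ, p i θ = 0))
    (ρ : (Fin n → ℝ) → Matrix (Fin d) (Fin d) ℂ)
    (hρ : ∀ θ, ρ θ = ∑ i, (p i θ : ℂ) • Matrix.vecMulVec (w i θ) (star (w i θ)))
    (lamt : Fin n → (Fin n → ℝ) → Matrix (Fin d) (Fin d) ℂ)
    (hlamt : ∀ (k : Fin n) θ, lamt k θ =
      (∑ i, if 0 < p i θ then
          ((pd i k θ / p i θ : ℝ) : ℂ) • Matrix.vecMulVec (w i θ) (star (w i θ)) else 0)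
      + (2 : ℂ) • ∑ i, ∑ j, (if i ≠ j ∧ 0 < p i θ + p j θ then
          (((p i θ - p j θ) / (p i θ + p j θ) : ℝ) : ℂ) •
            inn (wd i k θ) (w j θ) • Matrix.vecMulVec (w i θ) (star (w j θ)) else 0)) :
    ∀ θ : Fin n → ℝ,
      (∀ k : Fin n, (lamt k θ).IsHermitian) ∧
      (∀ (k : Fin n) (a b : Fin d),
        HasDerivAt (fun t => ρ (Function.update θ k t) a b)
          (((1 / 2 : ℂ) • (ρ θ * lamt k θ + lamt k θ * ρ θ)) a b) (θ k)) ∧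
      (∀ k l : Fin n, ((lamt k θ * ρ θ * lamt l θ).trace).re =
        (∑ i, if 0 < p i θ then pd i k θ * pd i l θ / p i θ else 0)
        + 4 * (∑ i, ∑ j, if i < j ∧ 0 < p i θ + p j θ then
            (((p i θ - p j θ) ^ 2 / (p i θ + p j θ) : ℝ) : ℂ) *
              inn (wd i k θ) (w j θ) * inn (w j θ) (wd i l θ) else 0).re) := by
  intro θ
  have horth' : ∀ i j : Fin d, inn ((fun i => w i θ) i) ((fun i => w i θ) j)
      = if i = j then 1 else 0 := fun i j => horth θ i j
  -- componentwise derivatives of w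
  have hwdc : ∀ (i : Fin d) (k : Fin n) (a : Fin d),
      HasDerivAt (fun t => w i (Function.update θ k t) a) (wd i k θ a) (θ k) :=
    fun i k a => hasDerivAt_pi.mp (hwd i k θ) a
  -- skew-symmetry from differentiating orthonormality
  have skew : ∀ (k : Fin n) (i j : Fin d),
      inn (wd i k θ) (w j θ) + inn (w i θ) (wd j k θ) = 0 := by
    intro k i j
    have h1 : HasDerivAt
        (fun t => inn (w i (Function.update θ k t)) (w j (Function.update θ k t)))
        (inn (wd i k θ) (w j θ) + inn (w i θ) (wd j k θ)) (θ k) := by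
      have h2 : HasDerivAt
          (fun t => ∑ a, (starRingEnd ℂ) (w i (Function.update θ k t) a)
            * w j (Function.update θ k t) a)
          (∑ a : Fin d, ((starRingEnd ℂ) (wd i k θ a) * w j θ a
            + (starRingEnd ℂ) (w i θ a) * wd j k θ a)) (θ k) := by
        apply HasDerivAt.fun_sum
        intro a _
        have h4 := (hwdc i k a).star.mul (hwdc j k a)
        rw [Function.update_eq_self k θ] at h4
        simp only [starRingEnd_apply]
        exact h4
      have h3 : inn (wd i k θ) (w j θ) + inn (w i θ) (wd j k θ)
          = ∑ a : Fin d, ((starRingEnd ℂ) (wd i k θ a) * w j θ a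
            + (starRingEnd ℂ) (w i θ a) * wd j k θ a) := by
        rw [inn, inn, ← Finset.sum_add_distrib]
      rw [h3]
      exact h2
    have h0 : HasDerivAt
        (fun t => inn (w i (Function.update θ k t)) (w j (Function.update θ k t)))
        (0 : ℂ) (θ k) := by
      have he : (fun t => inn (w i (Function.update θ k t)) (w j (Function.update θ k t)))
          = fun _ => (if i = j then (1 : ℂ) else 0) := funext fun t => horth _ i j
      rw [he]; exact hasDerivAt_const _ _
    exact h1.unique h0
  -- pd vanishes for identically-zero p i
  have hpdz : ∀ i : Fin d, (∀ θ', p i θ' = 0) → ∀ k, pd i k θ = 0 := by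
    intro i h0 k
    have h1 : HasDerivAt (fun t => p i (Function.update θ k t)) 0 (θ k) := by
      have he : (fun t => p i (Function.update θ k t)) = fun _ => (0 : ℝ) :=
        funext fun t => h0 _
      rw [he]; exact hasDerivAt_const _ _
    exact (hpd i k θ).unique h1
  -- lamt and ρ in `mk` form
  have hlam_mk : ∀ k : Fin n,
      lamt k θ = SLDAux.mk (fun i => w i θ) (Cmat p pd w wd θ k) := by
    intro k
    rw [hlamt k θ, SLDAux.mk_eq_sum]
    have h1 : (∑ i, if 0 < p i θ then
          ((pd i k θ / p i θ : ℝ) : ℂ) • Matrix.vecMulVec (w i θ) (star (w i θ)) else 0)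
        = ∑ i, ∑ j, (if i = j then (if 0 < p i θ then
          ((pd i k θ / p i θ : ℝ) : ℂ) • Matrix.vecMulVec (w i θ) (star (w j θ)) else 0)
            else 0) := by
      refine Finset.sum_congr rfl fun i _ => ?_
      rw [Finset.sum_ite_eq]; simp
    rw [h1, Finset.smul_sum]
    simp_rw [Finset.smul_sum]
    rw [← Finset.sum_add_distrib]
    refine Finset.sum_congr rfl fun i _ => ?_
    rw [← Finset.sum_add_distrib]
    refine Finset.sum_congr rfl fun j _ => ?_
    by_cases hij : i = j
    · subst hij
      simp only [Cmat, Matrix.of_apply, if_pos rfl, ne_eq, not_true_eq_false, false_and,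
        if_false, smul_zero, add_zero]
      split_ifs <;> simp
    · rw [if_neg hij]
      simp only [Cmat, Matrix.of_apply, if_neg hij]
      by_cases hc : 0 < p i θ + p j θ
      · rw [if_pos (⟨hij, hc⟩ : i ≠ j ∧ 0 < p i θ + p j θ), if_pos hc, zero_add,
          smul_smul, smul_smul]
      · rw [if_neg (fun h : i ≠ j ∧ 0 < p i θ + p j θ => hc h.2), if_neg hc]
        simp
  have hρ_mk : ρ θ = SLDAux.mk (fun i => w i θ) (Matrix.diagonal fun i => (p i θ : ℂ)) := by
    rw [hρ θ, SLDAux.mk_eq_sum]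
    refine Finset.sum_congr rfl fun i _ => ?_
    have hterm : ∀ j : Fin d, (Matrix.diagonal fun i => (p i θ : ℂ)) i j •
        Matrix.vecMulVec (w i θ) (star (w j θ))
        = if i = j then (p i θ : ℂ) • Matrix.vecMulVec (w i θ) (star (w j θ)) else 0 := by
      intro j; rw [Matrix.diagonal_apply]; split_ifs <;> simp
    rw [Finset.sum_congr rfl fun j _ => hterm j, Finset.sum_ite_eq,
      if_pos (Finset.mem_univ i)]
  refine ⟨?_, ?_, ?_⟩
  · -- Hermitian
    intro k
    show (lamt k θ).conjTranspose = lamt k θ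
    rw [hlam_mk k, SLDAux.mk_conjT]
    suffices hCC : (Cmat p pd w wd θ k).conjTranspose = Cmat p pd w wd θ k by rw [hCC]
    ext i j
    rw [Matrix.conjTranspose_apply]
    by_cases hij : i = j
    · subst hij
      simp only [Cmat, Matrix.of_apply, if_pos rfl]
      split_ifs <;> simp [Complex.star_def, Complex.conj_ofReal]
    · have hvv : inn (wd j k θ) (w i θ) = -((starRingEnd ℂ) (inn (wd i k θ) (w j θ))) := by
        rw [eq_neg_of_add_eq_zero_left (skew k j i), SLDAux.inn_conj]
      simp only [Cmat, Matrix.of_apply, if_neg (Ne.symm hij), if_neg hij]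
      rw [add_comm (p j θ) (p i θ)]
      split_ifs with hc
      · rw [hvv]
        simp only [Complex.star_def, map_mul, map_neg, Complex.conj_conj, Complex.conj_ofReal,
          map_ofNat]
        push_cast
        ring
      · simp
  · -- SLD equation
    intro k a b
    have compl' : ∀ a b : Fin d, (∑ i, w i θ a * star (w i θ b)) = if a = b then 1 else 0 :=
      SLDAux.compl (fun i => w i θ) horth'
    have hskew' : ∀ i j : Fin d, inn (wd i k θ) (w j θ) = -inn (w i θ) (wd j k θ) :=
      fun i j => eq_neg_of_add_eq_zero_left (skew k i j)
    have claimA : ∀ i : Fin d,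
        ∑ j, inn (wd i k θ) (w j θ) * star (w j θ b) = star (wd i k θ b) := by
      intro i
      have e1 : ∀ j : Fin d, inn (wd i k θ) (w j θ) * star (w j θ b)
          = ∑ c, star (wd i k θ c) * (w j θ c * star (w j θ b)) := by
        intro j
        rw [inn, Finset.sum_mul]
        exact Finset.sum_congr rfl fun c _ => by rw [starRingEnd_apply]; ring
      rw [Finset.sum_congr rfl fun j _ => e1 j, Finset.sum_comm]
      have e2 : ∀ c : Fin d, ∑ j, star (wd i k θ c) * (w j θ c * star (w j θ b))
          = star (wd i k θ c) * (if c = b then 1 else 0) := by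
        intro c
        rw [← Finset.mul_sum, compl' c b]
      rw [Finset.sum_congr rfl fun c _ => e2 c]
      simp
    have claimB : ∀ i : Fin d,
        ∑ j, inn (w j θ) (wd i k θ) * w j θ a = wd i k θ a := by
      intro i
      have e1 : ∀ j : Fin d, inn (w j θ) (wd i k θ) * w j θ a
          = ∑ c, wd i k θ c * (w j θ a * star (w j θ c)) := by
        intro j
        rw [inn, Finset.sum_mul]
        exact Finset.sum_congr rfl fun c _ => by rw [starRingEnd_apply]; ring
      rw [Finset.sum_congr rfl fun j _ => e1 j, Finset.sum_comm]
      have e2 : ∀ c : Fin d, ∑ j, wd i k θ c * (w j θ a * star (w j θ c))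
          = wd i k θ c * (if a = c then 1 else 0) := by
        intro c
        rw [← Finset.mul_sum, compl' a c]
      rw [Finset.sum_congr rfl fun c _ => e2 c]
      simp
    -- the matrix in mk form
    have hmkform : (1 / 2 : ℂ) • (ρ θ * lamt k θ + lamt k θ * ρ θ)
        = SLDAux.mk (fun i => w i θ)
            ((1 / 2 : ℂ) • ((Matrix.diagonal fun i => (p i θ : ℂ)) * Cmat p pd w wd θ k
              + Cmat p pd w wd θ k * (Matrix.diagonal fun i => (p i θ : ℂ)))) := by
      rw [hρ_mk, hlam_mk k, SLDAux.mk_mul _ horth', SLDAux.mk_mul _ horth',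
        ← SLDAux.mk_add, ← SLDAux.mk_smul]
    have hG : (1 / 2 : ℂ) • ((Matrix.diagonal fun i => (p i θ : ℂ)) * Cmat p pd w wd θ k
          + Cmat p pd w wd θ k * (Matrix.diagonal fun i => (p i θ : ℂ)))
        = Matrix.of (fun i j => (if i = j then ((pd i k θ : ℝ) : ℂ) else 0)
            + ((p i θ : ℂ) - (p j θ : ℂ)) * inn (wd i k θ) (w j θ)) := by
      ext i j
      simp only [Matrix.smul_apply, Matrix.add_apply, Matrix.diagonal_mul,
        Matrix.mul_diagonal, Matrix.of_apply]
      by_cases hij : i = j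
      · subst hij
        simp only [Cmat, Matrix.of_apply, if_pos rfl]
        by_cases hpos : 0 < p i θ
        · rw [if_pos hpos]
          have hne : (p i θ : ℂ) ≠ 0 := by
            exact_mod_cast ne_of_gt hpos
          push_cast
          field_simp
          simp only [smul_eq_mul, sub_self, mul_zero, zero_mul, add_zero]; ring
        · have hp0 : p i θ = 0 := le_antisymm (not_lt.mp hpos) (hpnn i θ)
          have hpz : ∀ θ', p i θ' = 0 := by
            rcases hdich i with hall | hall
            · exact absurd (hall θ) (by rw [hp0]; exact lt_irrefl 0)
            · exact hall
          have hpd0 : pd i k θ = 0 := hpdz i hpz k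
          rw [if_neg hpos]
          simp [hp0, hpd0]
      · simp only [Cmat, Matrix.of_apply, if_neg hij]
        by_cases hc : 0 < p i θ + p j θ
        · rw [if_pos hc]
          have hne : ((p i θ + p j θ : ℝ) : ℂ) ≠ 0 := by
            exact_mod_cast ne_of_gt hc
          push_cast at hne ⊢
          field_simp
          ring
        · have hpi : p i θ = 0 := by nlinarith [hpnn i θ, hpnn j θ]
          have hpj : p j θ = 0 := by nlinarith [hpnn i θ, hpnn j θ]
          rw [if_neg hc]
          simp [hpi, hpj]
    -- HasDerivAt of the entry
    have hfun : (fun t : ℝ => ρ (Function.update θ k t) a b)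
        = fun t => ∑ i, ((p i (Function.update θ k t) : ℂ)
            * (w i (Function.update θ k t) a * star (w i (Function.update θ k t) b))) := by
      funext t
      rw [hρ]
      simp [Matrix.sum_apply, Matrix.vecMulVec_apply]
    have hder : HasDerivAt (fun t => ∑ i, ((p i (Function.update θ k t) : ℂ)
          * (w i (Function.update θ k t) a * star (w i (Function.update θ k t) b))))
        (∑ i, (((pd i k θ : ℝ) : ℂ) * (w i θ a * star (w i θ b))
          + ((p i θ : ℝ) : ℂ) * (wd i k θ a * star (w i θ b) + w i θ a * star (wd i k θ b))))
        (θ k) := by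
      apply HasDerivAt.fun_sum
      intro i _
      have h1 : HasDerivAt (fun t => ((p i (Function.update θ k t) : ℝ) : ℂ))
          ((pd i k θ : ℝ) : ℂ) (θ k) := (hpd i k θ).ofReal_comp
      have h2 := (hwdc i k a).fun_mul (hwdc i k b).star
      have h3 := h1.fun_mul h2
      rw [Function.update_eq_self k θ] at h3
      exact h3
    -- value identity
    have hval : ∑ i, ∑ j, ((if i = j then ((pd i k θ : ℝ) : ℂ) else 0)
          + ((p i θ : ℂ) - (p j θ : ℂ)) * inn (wd i k θ) (w j θ)) * (w i θ a * star (w j θ b))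
        = ∑ i, (((pd i k θ : ℝ) : ℂ) * (w i θ a * star (w i θ b))
          + ((p i θ : ℝ) : ℂ) * (wd i k θ a * star (w i θ b) + w i θ a * star (wd i k θ b))) := by
      have hX : ∀ i : Fin d, ∑ j, ((p i θ : ℂ) * inn (wd i k θ) (w j θ))
            * (w i θ a * star (w j θ b))
          = (p i θ : ℂ) * (w i θ a * star (wd i k θ b)) := by
        intro i
        have e : ∀ j : Fin d, ((p i θ : ℂ) * inn (wd i k θ) (w j θ)) * (w i θ a * star (w j θ b))
            = ((p i θ : ℂ) * w i θ a) * (inn (wd i k θ) (w j θ) * star (w j θ b)) :=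
          fun j => by ring
        rw [Finset.sum_congr rfl fun j _ => e j, ← Finset.mul_sum, claimA i]
        ring
      have hY : ∑ i, ∑ j, ((p j θ : ℂ) * inn (wd i k θ) (w j θ)) * (w i θ a * star (w j θ b))
          = -∑ i, (p i θ : ℂ) * (wd i k θ a * star (w i θ b)) := by
        have e : ∀ i j : Fin d, ((p j θ : ℂ) * inn (wd i k θ) (w j θ)) * (w i θ a * star (w j θ b))
            = -(((p j θ : ℂ) * star (w j θ b)) * (inn (w i θ) (wd j k θ) * w i θ a)) := by
          intro i j; rw [hskew' i j]; ring
        rw [Finset.sum_congr rfl fun i _ => Finset.sum_congr rfl fun j _ => e i j,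
          Finset.sum_comm, ← Finset.sum_neg_distrib]
        refine Finset.sum_congr rfl fun j _ => ?_
        calc ∑ i, -(((p j θ : ℂ) * star (w j θ b)) * (inn (w i θ) (wd j k θ) * w i θ a))
            = -(((p j θ : ℂ) * star (w j θ b)) * ∑ i, inn (w i θ) (wd j k θ) * w i θ a) := by
              rw [Finset.mul_sum, ← Finset.sum_neg_distrib]
          _ = -((p j θ : ℂ) * (wd j k θ a * star (w j θ b))) := by rw [claimB j]; ring
      have hsplit : ∀ i j : Fin d, ((if i = j then ((pd i k θ : ℝ) : ℂ) else 0)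
            + ((p i θ : ℂ) - (p j θ : ℂ)) * inn (wd i k θ) (w j θ)) * (w i θ a * star (w j θ b))
          = (if i = j then ((pd i k θ : ℝ) : ℂ) * (w i θ a * star (w j θ b)) else 0)
            + (((p i θ : ℂ) * inn (wd i k θ) (w j θ)) * (w i θ a * star (w j θ b))
              - ((p j θ : ℂ) * inn (wd i k θ) (w j θ)) * (w i θ a * star (w j θ b))) := by
        intro i j; split_ifs <;> ring
      simp_rw [hsplit, Finset.sum_add_distrib, Finset.sum_sub_distrib, Finset.sum_ite_eq,
        Finset.mem_univ, if_true]
      rw [Finset.sum_congr rfl fun i _ => hX i, hY, sub_neg_eq_add,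
        ← Finset.sum_add_distrib]
      exact congrArg _ (Finset.sum_congr rfl fun i _ => by ring)
    rw [hfun, hmkform, hG, SLDAux.mk_apply]
    simp only [Matrix.of_apply]
    rw [hval]
    exact hder
  · -- information matrix
    intro k l
    have htr : (lamt k θ * ρ θ * lamt l θ).trace
        = ∑ i, ∑ j, Cmat p pd w wd θ k i j * (p j θ : ℂ) * Cmat p pd w wd θ l j i := by
      rw [hlam_mk k, hlam_mk l, hρ_mk, SLDAux.mk_mul _ horth', SLDAux.mk_mul _ horth',
        SLDAux.trace_mk _ horth']
      rw [Matrix.trace]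
      refine Finset.sum_congr rfl fun i _ => ?_
      simp only [Matrix.diag, Matrix.mul_apply, Matrix.diagonal_apply, mul_ite, mul_zero]
      refine Finset.sum_congr rfl fun x _ => ?_
      rw [Finset.sum_ite_eq', if_pos (Finset.mem_univ x)]
    have hsum : ∑ i, ∑ j, Cmat p pd w wd θ k i j * (p j θ : ℂ) * Cmat p pd w wd θ l j i
        = (∑ i, Cmat p pd w wd θ k i i * (p i θ : ℂ) * Cmat p pd w wd θ l i i)
          + ∑ i, ∑ j, Foff p pd w wd θ k l i j := by
      rw [← Finset.sum_add_distrib]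
      refine Finset.sum_congr rfl fun i _ => ?_
      have e : ∀ j : Fin d, Cmat p pd w wd θ k i j * (p j θ : ℂ) * Cmat p pd w wd θ l j i
          = (if i = j then Cmat p pd w wd θ k i j * (p j θ : ℂ) * Cmat p pd w wd θ l j i else 0)
            + Foff p pd w wd θ k l i j := by
        intro j
        simp only [Foff]
        split_ifs <;> simp
      rw [Finset.sum_congr rfl fun j _ => e j, Finset.sum_add_distrib, Finset.sum_ite_eq,
        if_pos (Finset.mem_univ i)]
    have hdiag : ∀ i : Fin d,
        (Cmat p pd w wd θ k i i * (p i θ : ℂ) * Cmat p pd w wd θ l i i).re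
        = if 0 < p i θ then pd i k θ * pd i l θ / p i θ else 0 := by
      intro i
      simp only [Cmat, Matrix.of_apply, eq_self_iff_true, if_true]
      by_cases hpos : 0 < p i θ
      · rw [if_pos hpos, if_pos hpos, if_pos hpos]
        have hne0 : p i θ ≠ 0 := ne_of_gt hpos
        have hre : (pd i k θ / p i θ) * p i θ * (pd i l θ / p i θ)
            = pd i k θ * pd i l θ / p i θ := by
          rw [div_mul_cancel₀ _ hne0, mul_div_assoc']
        rw [show ((pd i k θ / p i θ : ℝ) : ℂ) * (p i θ : ℂ) * ((pd i l θ / p i θ : ℝ) : ℂ)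
            = ((pd i k θ * pd i l θ / p i θ : ℝ) : ℂ) from by rw [← hre]; push_cast; ring,
          Complex.ofReal_re]
      · rw [if_neg hpos, if_neg hpos, if_neg hpos]
        simp
    have hFdiag : ∀ i : Fin d, Foff p pd w wd θ k l i i = 0 := fun i => if_pos rfl
    have hpair : ∀ i j : Fin d,
        (if i < j then Foff p pd w wd θ k l i j + Foff p pd w wd θ k l j i else 0).re
        = 4 * (if i < j ∧ 0 < p i θ + p j θ then
            (((p i θ - p j θ) ^ 2 / (p i θ + p j θ) : ℝ) : ℂ) *
              inn (wd i k θ) (w j θ) * inn (w j θ) (wd i l θ) else 0).re := by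
      intro i j
      by_cases hlt : i < j
      · have hij : i ≠ j := ne_of_lt hlt
        rw [if_pos hlt]
        by_cases hc : 0 < p i θ + p j θ
        · rw [if_pos (⟨hlt, hc⟩ : i < j ∧ 0 < p i θ + p j θ)]
          have hsne : p i θ + p j θ ≠ 0 := ne_of_gt hc
          have hu2 : inn (wd j k θ) (w i θ)
              = -((starRingEnd ℂ) (inn (wd i k θ) (w j θ))) := by
            rw [eq_neg_of_add_eq_zero_left (skew k j i), SLDAux.inn_conj]
          have hv1 : inn (wd j l θ) (w i θ) = -inn (w j θ) (wd i l θ) :=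
            eq_neg_of_add_eq_zero_left (skew l j i)
          have hv2 : inn (wd i l θ) (w j θ)
              = (starRingEnd ℂ) (inn (w j θ) (wd i l θ)) := SLDAux.inn_conj _ _
          have hFij : Foff p pd w wd θ k l i j + Foff p pd w wd θ k l j i
              = ((4 * ((p i θ - p j θ) / (p i θ + p j θ)) ^ 2 * p j θ : ℝ) : ℂ)
                  * (inn (wd i k θ) (w j θ) * inn (w j θ) (wd i l θ))
                + ((4 * ((p i θ - p j θ) / (p i θ + p j θ)) ^ 2 * p i θ : ℝ) : ℂ)
                  * (starRingEnd ℂ)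
                    (inn (wd i k θ) (w j θ) * inn (w j θ) (wd i l θ)) := by
            simp only [Foff, Cmat, Matrix.of_apply, if_neg hij, if_neg (Ne.symm hij)]
            rw [add_comm (p j θ) (p i θ)]
            simp only [hc, if_true]
            rw [hu2, hv1, hv2, map_mul]
            push_cast
            ring
          have hR : ((((p i θ - p j θ) ^ 2 / (p i θ + p j θ) : ℝ) : ℂ) *
                inn (wd i k θ) (w j θ) * inn (w j θ) (wd i l θ)).re
              = ((p i θ - p j θ) ^ 2 / (p i θ + p j θ)) *
                (inn (wd i k θ) (w j θ) * inn (w j θ) (wd i l θ)).re := by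
            rw [mul_assoc, Complex.re_ofReal_mul]
          rw [hFij, Complex.add_re, Complex.re_ofReal_mul, Complex.re_ofReal_mul,
            Complex.conj_re, hR]
          field_simp
          ring
        · rw [if_neg (fun h : i < j ∧ 0 < p i θ + p j θ => hc h.2)]
          have h1 : Foff p pd w wd θ k l i j = 0 := by
            simp only [Foff, Cmat, Matrix.of_apply, if_neg hij, if_neg hc]
            ring
          have h2 : Foff p pd w wd θ k l j i = 0 := by
            simp only [Foff, Cmat, Matrix.of_apply, if_neg (Ne.symm hij)]
            rw [add_comm (p j θ) (p i θ), if_neg hc]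
            ring
          rw [h1, h2]
          simp
      · rw [if_neg hlt, if_neg (fun h : i < j ∧ 0 < p i θ + p j θ => hlt h.1)]
        simp
    rw [htr, hsum, Complex.add_re, Complex.re_sum,
      SLDAux.sum_split _ hFdiag, Complex.re_sum, Complex.re_sum]
    congr 1
    · exact Finset.sum_congr rfl fun i _ => hdiag i
    · rw [Finset.mul_sum]
      simp_rw [Complex.re_sum, Finset.mul_sum]
      exact Finset.sum_congr rfl fun i _ => Finset.sum_congr rfl fun j _ => hpair i j
end
end
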